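/- arXiv:2108.04870 — 4 statements merged into one kernel-verified Lean document; each statement's English description precedes it below -/
import Mathlib

section
/- Let p be an odd prime and let a : (ℤ/pℤ)² → ℤ be any assignment of integers to the elements of the group G = (ℤ/pℤ)². If p divides the group determinant D_G((a_g)), then p^(p+3) divides D_G((a_g)). -/
open Finset

/-- The group determinant of a finite additive group `G` with integer
coefficients `a`: the determinant of the matrix whose `(g,h)` entry is
`a (g - h)`. -/
def addGroupDet {G : Type*} [AddGroup G] [Fintype G] [DecidableEq G] (a : G → ℤ) : ℤ :=
  Matrix.det (Matrix.of fun g h : G => a (g - h))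

section Factor

variable {R : Type*} [CommRing R] [IsDomain R] [CharZero R] {p : ℕ} [NeZero p]
  {ζ : R}

lemma key_sum (hζ : IsPrimitiveRoot ζ p) (c : Fin 2 → ZMod p) :
    (∑ w : Fin 2 → ZMod p, (AddChar.zmodChar p hζ.pow_eq_one) (∑ i, w i * c i))
      = if c = 0 then ((p : R))^2 else 0 := by
  classical
  set ψ := AddChar.zmodChar p hζ.pow_eq_one with hψdef
  have hprim : ψ.IsPrimitive := AddChar.zmodChar_primitive_of_primitive_root p hζ
  have step1 : (∑ w : Fin 2 → ZMod p, ψ (∑ i, w i * c i))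
      = ∏ i : Fin 2, ∑ x : ZMod p, ψ (x * c i) := by
    rw [Finset.prod_univ_sum]
    refine Finset.sum_congr rfl fun w _ => ?_
    rw [Fin.sum_univ_two, Fin.prod_univ_two, AddChar.map_add_eq_mul]
  rw [step1]
  by_cases hc : c = 0
  · subst hc
    simp only [Pi.zero_apply, mul_zero, AddChar.map_zero_eq_one]
    simp [Finset.card_univ, ZMod.card, sq]
  · obtain ⟨i, hi⟩ : ∃ i, c i ≠ 0 := by
      by_contra hall
      push_neg at hall
      exact hc (funext fun i => hall i)
    rw [if_neg hc]
    apply Finset.prod_eq_zero (Finset.mem_univ i)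
    have : (∑ x : ZMod p, ψ (x * c i)) = ∑ x : ZMod p, (ψ.mulShift (c i)) x := by
      refine Finset.sum_congr rfl fun x _ => ?_
      rw [AddChar.mulShift_apply, mul_comm]
    rw [this]
    exact AddChar.sum_eq_zero_iff_ne_zero.mpr (by
      simpa [AddChar.one_eq_zero] using hprim hi)

lemma groupDet_factor (hζ : IsPrimitiveRoot ζ p) (a : (Fin 2 → ZMod p) → ℤ) :
    ((addGroupDet a : ℤ) : R) =
      ∏ w : Fin 2 → ZMod p, ∑ g : Fin 2 → ZMod p,
        (a g : R) * (AddChar.zmodChar p hζ.pow_eq_one) (∑ i, w i * g i) := by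
  classical
  set ψ := AddChar.zmodChar p hζ.pow_eq_one with hψdef
  set F : (Fin 2 → ZMod p) → R := fun w => ∑ g, (a g : R) * ψ (∑ i, w i * g i) with hF
  set P : Matrix (Fin 2 → ZMod p) (Fin 2 → ZMod p) R :=
    Matrix.of (fun g w => ψ (∑ i, w i * g i)) with hP
  set Q : Matrix (Fin 2 → ZMod p) (Fin 2 → ZMod p) R :=
    Matrix.of (fun w g => ψ (-∑ i, w i * g i)) with hQ
  set M : Matrix (Fin 2 → ZMod p) (Fin 2 → ZMod p) R :=
    Matrix.of (fun g h => (a (g - h) : R)) with hM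
  -- inner product linearity
  have dot_sub : ∀ w g h : Fin 2 → ZMod p,
      (∑ i, w i * (g - h) i) = (∑ i, w i * g i) - ∑ i, w i * h i := by
    intro w g h
    simp [Fin.sum_univ_two, Pi.sub_apply, mul_sub]
  have hPQ : P * Q = ((p : R)^2) • 1 := by
    ext g g'
    have : (P * Q) g g' = ∑ w : Fin 2 → ZMod p, ψ (∑ i, w i * (g - g') i) := by
      rw [Matrix.mul_apply]
      refine Finset.sum_congr rfl fun w _ => ?_
      rw [hP, hQ, Matrix.of_apply, Matrix.of_apply, ← AddChar.map_add_eq_mul, dot_sub]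
      ring_nf
    rw [this, key_sum hζ]
    by_cases hgg : g = g'
    · subst hgg; simp
    · rw [if_neg (by simpa [sub_eq_zero] using hgg)]
      simp [Matrix.one_apply, hgg]
  have hdetP : P.det ≠ 0 := by
    intro h0
    have : (P * Q).det = 0 := by rw [Matrix.det_mul, h0, zero_mul]
    rw [hPQ, Matrix.det_smul, Matrix.det_one, mul_one] at this
    have hp0 : ((p : R))^2 ≠ 0 := pow_ne_zero _ (Nat.cast_ne_zero.mpr (NeZero.ne p))
    exact pow_ne_zero _ hp0 this
  have key2 : ∀ (A B : ZMod p) (c : R), c * ψ B = ψ A * (c * ψ (B - A)) := by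
    intro A B c
    rw [mul_left_comm, ← AddChar.map_add_eq_mul]
    congr 2
    ring
  have hMP : M * P = P * Matrix.diagonal (fun w => F (-w)) := by
    ext g w
    rw [Matrix.mul_apply, Matrix.mul_diagonal]
    have step : ∀ h : Fin 2 → ZMod p, M g h * P h w = ψ (∑ i, w i * g i) *
        ((a (g - h) : R) * ψ ((∑ i, w i * h i) - (∑ i, w i * g i))) := by
      intro h
      simp only [hM, hP, Matrix.of_apply]
      exact key2 _ _ _
    rw [Finset.sum_congr rfl (fun h _ => step h), ← Finset.mul_sum]
    rw [hP, Matrix.of_apply]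
    congr 1
    rw [hF]
    refine Fintype.sum_equiv (Equiv.subLeft g) _ _ fun h => ?_
    have harg : (∑ i, (-w) i * ((Equiv.subLeft g) h) i)
        = (∑ i, w i * h i) - (∑ i, w i * g i) := by
      simp only [Fin.sum_univ_two, Equiv.subLeft_apply, Pi.neg_apply, Pi.sub_apply]
      ring
    rw [harg, Equiv.subLeft_apply]
  have hdet : M.det * P.det = P.det * ∏ w, F (-w) := by
    rw [← Matrix.det_mul, hMP, Matrix.det_mul, Matrix.det_diagonal]
  have hMdet : M.det = ∏ w, F (-w) := by
    rw [mul_comm] at hdet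
    exact mul_left_cancel₀ hdetP hdet
  have hneg : (∏ w : Fin 2 → ZMod p, F (-w)) = ∏ w, F w :=
    Fintype.prod_equiv (Equiv.neg _) _ _ (fun w => by simp)
  have hcast : ((addGroupDet a : ℤ) : R) = M.det := by
    show (Int.castRingHom R) (addGroupDet a) = M.det
    rw [addGroupDet, RingHom.map_det]
    rfl
  rw [hcast, hMdet, hneg]

end Factor

section Aux

variable {R : Type*} [CommRing R]

/-- second order expansion of powers of ζ at 1 -/
lemma pow_sub_one_sub (ζ : R) (n : ℕ) :
    (ζ - 1)^2 ∣ ζ^n - 1 - n * (ζ - 1) := by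
  induction n with
  | zero => simp
  | succ n ih =>
    have key : ζ^(n+1) - 1 - (n+1 : ℕ) * (ζ - 1)
        = ζ * (ζ^n - 1 - n * (ζ - 1)) + n * (ζ - 1)^2 := by
      push_cast
      ring
    rw [key]
    exact dvd_add (Dvd.dvd.mul_left ih ζ) (Dvd.dvd.mul_left dvd_rfl _)

lemma pi_pow_dvd_p [IsDomain R] {p : ℕ} (hp : 1 < p) (hp2 : Fact p.Prime) {ζ : R} (hζ : IsPrimitiveRoot ζ p) :
    (ζ - 1)^(p-1) ∣ (p : R) ∧ (p : R) ∣ (ζ - 1)^(p-1) := by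
  obtain ⟨n, rfl⟩ : ∃ n, p = n + 1 := ⟨p - 1, (Nat.succ_pred_eq_of_pos (by omega)).symm⟩
  have hprod : ∏ k ∈ range n, (1 - ζ ^ (k + 1)) = ((n : R) + 1) :=
    hζ.prod_one_sub_pow_eq_order
  have hn : n + 1 - 1 = n := rfl
  rw [hn]
  have hcast : ((n + 1 : ℕ) : R) = (n : R) + 1 := by push_cast; ring
  constructor
  · rw [hcast, ← hprod]
    have : ∀ k ∈ range n, (ζ - 1) ∣ (1 - ζ ^ (k + 1)) := by
      intro k _
      rw [show (1 - ζ^(k+1)) = -(ζ^(k+1) - 1) from by ring]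
      exact dvd_neg.mpr (by simpa using sub_dvd_pow_sub_pow ζ 1 (k+1))
    calc (ζ - 1)^n = ∏ _k ∈ range n, (ζ - 1) := by rw [Finset.prod_const, Finset.card_range]
      _ ∣ ∏ k ∈ range n, (1 - ζ ^ (k + 1)) := Finset.prod_dvd_prod_of_dvd _ _ this
  · have hdvd : ∀ k ∈ range n, (1 - ζ ^ (k + 1)) ∣ (ζ - 1) := by
      intro k hk
      have hk' : k + 1 < n + 1 := by simpa using Finset.mem_range.mp hk
      have hcop : Nat.Coprime (k+1) (n+1) := by
        rcases hp2 with ⟨hp2⟩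
        exact Nat.Coprime.symm (hp2.coprime_iff_not_dvd.mpr
          (fun hd => by have := Nat.le_of_dvd (by omega) hd; omega))
      obtain ⟨j, -, hj⟩ := Nat.exists_mul_mod_eq_one_of_coprime hcop hp
      have hzeta : (ζ ^ (k+1)) ^ j = ζ := by
        rw [← pow_mul, pow_eq_pow_mod ((k+1)*j) hζ.pow_eq_one, hj, pow_one]
      have : (ζ ^ (k+1) - 1) ∣ ((ζ ^ (k+1)) ^ j - 1) := by
        simpa using sub_dvd_pow_sub_pow (ζ ^ (k+1)) 1 j
      rw [hzeta] at this
      rw [show (1 - ζ^(k+1)) = -(ζ^(k+1) - 1) from by ring]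
      exact (neg_dvd).mpr this
    rw [hcast, ← hprod]
    calc ∏ k ∈ range n, (1 - ζ ^ (k + 1)) ∣ ∏ _k ∈ range n, (ζ - 1) :=
          Finset.prod_dvd_prod_of_dvd _ _ hdvd
      _ = (ζ - 1)^n := by rw [Finset.prod_const, Finset.card_range]

end Aux

lemma int_dvd_of_ringOfIntegers_dvd {K : Type*} [Field K] [NumberField K] {m n : ℤ}
    (h : (m : NumberField.RingOfIntegers K) ∣ (n : NumberField.RingOfIntegers K)) : m ∣ n := by
  obtain ⟨x, hx⟩ := h
  by_cases hm : m = 0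
  · subst hm
    simp only [Int.cast_zero, zero_mul] at hx
    have : (n : NumberField.RingOfIntegers K) = 0 := hx
    have hn : n = 0 := by exact_mod_cast this
    simp [hn]
  · set q : ℚ := (n : ℚ) / (m : ℚ) with hq
    have hmK : ((m : ℚ) : K) ≠ 0 := by
      simp [hm]
    have hxK : (algebraMap (NumberField.RingOfIntegers K) K) x = algebraMap ℚ K q := by
      have hcast' := congrArg (algebraMap (NumberField.RingOfIntegers K) K) hx
      simp only [map_mul, map_intCast] at hcast'
      rw [hq, map_div₀, map_intCast, map_intCast]
      have hmK' : ((m : ℤ) : K) ≠ 0 := by exact_mod_cast hmK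
      rw [eq_div_iff hmK', hcast']
      ring
    have hint : IsIntegral ℤ (algebraMap ℚ K q) := by
      rw [← hxK]
      exact NumberField.RingOfIntegers.isIntegral_coe x
    have hqint : IsIntegral ℤ q :=
      (isIntegral_algebraMap_iff (algebraMap ℚ K).injective).mp hint
    obtain ⟨y, hy⟩ := IsIntegrallyClosed.isIntegral_iff.mp hqint
    refine ⟨y, ?_⟩
    have : (n : ℚ) = (m : ℚ) * (y : ℚ) := by
      have hyq : (y : ℚ) = q := hy
      rw [hyq, hq]
      field_simp
    exact_mod_cast this

/-- If `p` is an odd prime and `p` divides the group determinant of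
`G = (ℤ/pℤ)²`, then `p^(p+3)` divides it. -/
theorem stmt0 (p : ℕ) [Fact p.Prime] (hodd : Odd p)
    (a : (Fin 2 → ZMod p) → ℤ)
    (h : (p : ℤ) ∣ addGroupDet a) :
    (p : ℤ) ^ (p + 3) ∣ addGroupDet a := by
  classical
  have hp : p.Prime := Fact.out
  have hp1 : 1 < p := hp.one_lt
  have hp3 : 3 ≤ p := by
    rcases hodd with ⟨k, hk⟩
    have := hp.two_le
    omega
  haveI : NeZero p := ⟨by omega⟩
  set q : ℕ+ := ⟨p, hp.pos⟩ with hqdef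
  set K := CyclotomicField q ℚ with hKdef
  haveI : IsCyclotomicExtension {(q : ℕ)} ℚ K := by
    show IsCyclotomicExtension {(q : ℕ)} ℚ (CyclotomicField (q : ℕ) ℚ)
    exact CyclotomicField.isCyclotomicExtension _ _
  haveI : NumberField K := IsCyclotomicExtension.numberField {(q : ℕ)} ℚ K
  set R := NumberField.RingOfIntegers K with hRdef
  set ζK := IsCyclotomicExtension.zeta (q : ℕ) ℚ K with hζKdef
  have hζK : IsPrimitiveRoot ζK q := IsCyclotomicExtension.zeta_spec (q : ℕ) ℚ K
  set ζ : R := hζK.toInteger with hζdef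
  have hζ : IsPrimitiveRoot ζ p := hζK.toInteger_isPrimitiveRoot
  set π : R := ζ - 1 with hπdef
  haveI : Fact (Nat.Prime (q : ℕ)) := ⟨hp⟩
  have hπ : Prime π := hζK.zeta_sub_one_prime'
  set ψ := AddChar.zmodChar p hζ.pow_eq_one with hψdef
  set F : (Fin 2 → ZMod p) → R :=
    fun w => ∑ g, (a g : R) * ψ (∑ i, w i * g i) with hFdef
  have hfac : ((addGroupDet a : ℤ) : R) = ∏ w, F w := groupDet_factor hζ a
  set S : ℤ := ∑ g, a g with hSdef
  -- basic divisibility facts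
  have h1 : ∀ c : ZMod p, π ∣ (ψ c - 1) := by
    intro c
    rw [hψdef, AddChar.zmodChar_apply, hπdef]
    simpa using sub_dvd_pow_sub_pow ζ 1 c.val
  have hScast : ((S : ℤ) : R) = ∑ g, (a g : R) := by rw [hSdef, Int.cast_sum]
  have hFS : ∀ w, F w - (S : R) = ∑ g, (a g : R) * (ψ (∑ i, w i * g i) - 1) := by
    intro w
    rw [hFdef, hScast, ← Finset.sum_sub_distrib]
    exact Finset.sum_congr rfl fun g _ => by ring
  have hπFS : ∀ w, π ∣ F w - (S : R) := by
    intro w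
    rw [hFS w]
    exact Finset.dvd_sum fun g _ => (h1 _).mul_left _
  have hpi := pi_pow_dvd_p hp1 ⟨hp⟩ hζ
  have hπp : π ∣ (p : R) := (dvd_pow_self π (by omega : p - 1 ≠ 0)).trans hpi.1
  have hπ2p : π^2 ∣ (p : R) := (pow_dvd_pow π (by omega : 2 ≤ p - 1)).trans hpi.1
  have hcastdvd : ∀ m n : ℤ, m ∣ n → (m : R) ∣ (n : R) := fun m n hd => by
    obtain ⟨c, hc⟩ := hd; exact ⟨(c : R), by rw [hc, Int.cast_mul]⟩
  have hπD : π ∣ ((addGroupDet a : ℤ) : R) := hπp.trans (hcastdvd _ _ h)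
  -- p divides S
  have hπS : π ∣ (S : R) := by
    rw [hfac] at hπD
    obtain ⟨w₀, _, hw₀⟩ := hπ.exists_mem_finset_dvd hπD
    have : (S : R) = F w₀ - (F w₀ - (S : R)) := by ring
    rw [this]
    exact dvd_sub hw₀ (hπFS w₀)
  have hpS : (p : ℤ) ∣ S := by
    by_contra hnd
    have hS0 : ((S : ℤ) : ZMod p) ≠ 0 := fun h0 =>
      hnd ((ZMod.intCast_zmod_eq_zero_iff_dvd S p).mp h0)
    set t : ℤ := ((((S : ℤ) : ZMod p))⁻¹.val : ℤ) with htdef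
    have hmod : ((S * t - 1 : ℤ) : ZMod p) = 0 := by
      push_cast [htdef]
      rw [ZMod.natCast_val, ZMod.cast_id]
      rw [mul_inv_cancel₀ hS0]
      ring
    have hpd : (p : ℤ) ∣ S * t - 1 := (ZMod.intCast_zmod_eq_zero_iff_dvd _ p).mp hmod
    have h1R : π ∣ (1 : R) := by
      have d1 : π ∣ ((S * t : ℤ) : R) := by
        rw [Int.cast_mul]
        exact hπS.mul_right _
      have d2 : π ∣ ((S * t - 1 : ℤ) : R) := hπp.trans (hcastdvd _ _ hpd)
      have he : (1 : R) = ((S * t : ℤ) : R) - ((S * t - 1 : ℤ) : R) := by rw [Int.cast_sub, Int.cast_one]; ring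
      rw [he]
      exact dvd_sub d1 d2
    exact hπ.not_unit (isUnit_of_dvd_one h1R)
  -- second-order divisibility on the kernel line
  set A : ZMod p := ∑ g, ((a g : ℤ) : ZMod p) * g 0 with hAdef
  set B : ZMod p := ∑ g, ((a g : ℤ) : ZMod p) * g 1 with hBdef
  have hF2 : ∀ w : Fin 2 → ZMod p, w 0 * A + w 1 * B = 0 → π^2 ∣ F w := by
    intro w hw
    set N : ℤ := ∑ g, a g * (((∑ i, w i * g i : ZMod p)).val : ℤ) with hNdef
    have hNp : (p : ℤ) ∣ N := by
      rw [← ZMod.intCast_zmod_eq_zero_iff_dvd]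
      push_cast [hNdef]
      have : ∀ g : Fin 2 → ZMod p, ((a g : ℤ) : ZMod p) *
          ((((∑ i, w i * g i : ZMod p)).val : ZMod p))
          = ((a g : ℤ) : ZMod p) * (w 0 * g 0) + ((a g : ℤ) : ZMod p) * (w 1 * g 1) := by
        intro g
        rw [ZMod.natCast_val, ZMod.cast_id, Fin.sum_univ_two]
        ring
      rw [Finset.sum_congr rfl fun g _ => this g, Finset.sum_add_distrib]
      have e0 : (∑ g : Fin 2 → ZMod p, ((a g : ℤ) : ZMod p) * (w 0 * g 0)) = w 0 * A := by
        rw [hAdef, Finset.mul_sum]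
        exact Finset.sum_congr rfl fun g _ => by ring
      have e1 : (∑ g : Fin 2 → ZMod p, ((a g : ℤ) : ZMod p) * (w 1 * g 1)) = w 1 * B := by
        rw [hBdef, Finset.mul_sum]
        exact Finset.sum_congr rfl fun g _ => by ring
      rw [e0, e1, hw]
    have hexp : π^2 ∣ F w - (S : R) - (N : R) * π := by
      have hN : ((N : ℤ) : R) = ∑ g, (a g : R) * (((∑ i, w i * g i : ZMod p)).val : R) := by
        rw [hNdef, Int.cast_sum]; simp only [Int.cast_mul, Int.cast_natCast]
      have he : F w - (S : R) - (N : R) * π = ∑ g, (a g : R) *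
          (ψ (∑ i, w i * g i) - 1 - (((∑ i, w i * g i : ZMod p)).val : R) * π) := by
        rw [hFdef, hScast, hN, Finset.sum_mul, ← Finset.sum_sub_distrib,
          ← Finset.sum_sub_distrib]
        exact Finset.sum_congr rfl fun g _ => by ring
      rw [he]
      refine Finset.dvd_sum fun g _ => Dvd.dvd.mul_left ?_ _
      simpa [hψdef, AddChar.zmodChar_apply, hπdef] using
        pow_sub_one_sub ζ ((∑ i, w i * g i : ZMod p)).val
    have hd1 : π^2 ∣ ((S : ℤ) : R) := hπ2p.trans (hcastdvd _ _ hpS)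
    have hd2 : π^2 ∣ (N : R) * π := by
      rw [sq]
      exact mul_dvd_mul (hπp.trans (hcastdvd _ _ hNp)) dvd_rfl
    have : F w = (F w - (S : R) - (N : R) * π) + (S : R) + (N : R) * π := by ring
    rw [this]
    exact dvd_add (dvd_add hexp hd1) hd2
  -- the kernel line injection
  set ι : ZMod p → (Fin 2 → ZMod p) :=
    fun t => if B = 0 then ![0, t] else ![t, -t * A * B⁻¹] with hιdef
  have hι0 : ι 0 = 0 := by
    rw [hιdef]
    split_ifs <;> (funext i; fin_cases i <;> simp)
  have hι_inj : Function.Injective ι := by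
    intro t t' htt
    rw [hιdef] at htt
    by_cases hB0 : B = 0
    · simp only [if_pos hB0] at htt
      simpa using congrFun htt 1
    · simp only [if_neg hB0] at htt
      simpa using congrFun htt 0
  have hι_ker : ∀ t, (ι t) 0 * A + (ι t) 1 * B = 0 := by
    intro t
    by_cases hB0 : B = 0
    · simp only [hιdef, if_pos hB0]
      simp [hB0]
    · simp only [hιdef, if_neg hB0]
      simp only [Matrix.cons_val_zero, Matrix.cons_val_one, Matrix.head_cons]
      field_simp
      ring
  set T : Finset (Fin 2 → ZMod p) := (Finset.univ.erase (0 : ZMod p)).image ι with hTdef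
  have hTsub : T ⊆ Finset.univ.erase 0 := by
    intro w hw
    rw [hTdef] at hw
    obtain ⟨t, ht, rfl⟩ := Finset.mem_image.mp hw
    have ht0 : t ≠ 0 := (Finset.mem_erase.mp ht).1
    refine Finset.mem_erase.mpr ⟨?_, Finset.mem_univ _⟩
    intro h0
    exact ht0 (hι_inj (by rw [h0, hι0]))
  have hTcard : T.card = p - 1 := by
    rw [hTdef, Finset.card_image_of_injective _ hι_inj,
      Finset.card_erase_of_mem (Finset.mem_univ _), Finset.card_univ, ZMod.card]
  have hTker : ∀ w ∈ T, w 0 * A + w 1 * B = 0 := by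
    intro w hw
    rw [hTdef] at hw
    obtain ⟨t, _, rfl⟩ := Finset.mem_image.mp hw
    exact hι_ker t
  -- product split
  have hsplit : (∏ w, F w) = F 0 *
      ((∏ w ∈ (Finset.univ.erase (0 : Fin 2 → ZMod p)) \ T, F w) * ∏ w ∈ T, F w) := by
    rw [Finset.prod_sdiff hTsub, Finset.mul_prod_erase _ _ (Finset.mem_univ 0)]
  -- divisibilities of the pieces
  have hF0 : F 0 = (S : R) := by
    rw [hFdef, hScast]
    refine Finset.sum_congr rfl fun g _ => ?_
    simp
  have dv0 : π^(p-1) ∣ F 0 := by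
    rw [hF0]
    exact hpi.1.trans (hcastdvd _ _ hpS)
  have dvT : π^(2*(p-1)) ∣ ∏ w ∈ T, F w := by
    have hd : ∀ w ∈ T, π^2 ∣ F w := fun w hw => hF2 w (hTker w hw)
    have := Finset.prod_dvd_prod_of_dvd (s := T) (fun _ => π^2) F hd
    rw [Finset.prod_const, hTcard, ← pow_mul] at this
    exact this
  have hπF : ∀ w, π ∣ F w := by
    intro w
    have : F w = (F w - (S : R)) + (S : R) := by ring
    rw [this]
    exact dvd_add (hπFS w) hπS
  have hcardG : Fintype.card (Fin 2 → ZMod p) = p * p := by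
    rw [Fintype.card_fun]
    simp [ZMod.card, sq]
  have dvRest : π^((p*p-1)-(p-1)) ∣
      ∏ w ∈ (Finset.univ.erase (0 : Fin 2 → ZMod p)) \ T, F w := by
    have hc : ((Finset.univ.erase (0 : Fin 2 → ZMod p)) \ T).card = (p*p-1)-(p-1) := by
      rw [Finset.card_sdiff_of_subset hTsub, Finset.card_erase_of_mem (Finset.mem_univ _),
        Finset.card_univ, hcardG, hTcard]
    have := Finset.prod_dvd_prod_of_dvd
      (s := (Finset.univ.erase (0 : Fin 2 → ZMod p)) \ T)
      (fun _ => π) F (fun w _ => hπF w)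
    rw [Finset.prod_const, hc] at this
    exact this
  -- exponent arithmetic
  have hkey : (p-1) + (((p*p-1)-(p-1)) + 2*(p-1)) = (p-1)*(p+3) := by
    have h1 : 1 ≤ p := by omega
    have h2 : p ≤ p*p := Nat.le_mul_of_pos_left p hp.pos
    zify [h1, show 1 ≤ p*p from by omega, show p-1 ≤ p*p-1 from by omega]
    ring
  have hdvdR : π^((p-1)*(p+3)) ∣ ((addGroupDet a : ℤ) : R) := by
    rw [hfac, hsplit, ← hkey, pow_add, pow_add]
    exact mul_dvd_mul dv0 (mul_dvd_mul dvRest dvT)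
  have hfinal : ((p : R))^(p+3) ∣ ((addGroupDet a : ℤ) : R) := by
    refine dvd_trans ?_ hdvdR
    calc ((p : R))^(p+3) ∣ (π^(p-1))^(p+3) := pow_dvd_pow_of_dvd hpi.2 _
      _ = π^((p-1)*(p+3)) := by rw [← pow_mul]
  have hfinal' : (((p : ℤ)^(p+3) : ℤ) : R) ∣ ((addGroupDet a : ℤ) : R) := by
    rw [Int.cast_pow, Int.cast_natCast]
    exact hfinal
  exact int_dvd_of_ringOfIntegers_dvd hfinal'
end

section
/- Let p be a prime, n ≥ 1, and let a : (ℤ/pℤ)ⁿ → ℤ be any assignment of integers to the elements of G = (ℤ/pℤ)ⁿ. If p divides the group determinant D_G((a_g)), then p^(1 + (pⁿ−1)/(p−1)) divides D_G((a_g)). -/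
open Finset Polynomial

namespace GpdAux

variable {p n : ℕ} [NeZero p]

/-- The standard bilinear pairing on `(ZMod p)^n`, as an `AddMonoidHom` in the
second variable. -/
def L (w : Fin n → ZMod p) : (Fin n → ZMod p) →+ ZMod p where
  toFun v := ∑ i, w i * v i
  map_zero' := by simp
  map_add' x y := by simp [mul_add, Finset.sum_add_distrib]

variable {R : Type*} [CommRing R] {ζ : R}

/-- The additive character of `(ZMod p)^n` attached to `w`. -/
noncomputable def psi (hζ : ζ ^ p = 1) (w : Fin n → ZMod p) :
    AddChar (Fin n → ZMod p) R :=
  (AddChar.zmodChar p hζ).compAddMonoidHom (L w)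

lemma psi_apply (hζ : ζ ^ p = 1) (w v : Fin n → ZMod p) :
    psi hζ w v = ζ ^ (∑ i, w i * v i).val := by
  rw [psi, AddChar.compAddMonoidHom_apply, AddChar.zmodChar_apply]; rfl

lemma psi_mul (hζ : ζ ^ p = 1) (w w' g : Fin n → ZMod p) :
    psi hζ w (-g) * psi hζ w' g = psi hζ (w' - w) g := by
  rw [psi, psi, psi, AddChar.compAddMonoidHom_apply, AddChar.compAddMonoidHom_apply,
    AddChar.compAddMonoidHom_apply, ← AddChar.map_add_eq_mul]
  congr 1
  simp only [L, AddMonoidHom.coe_mk, ZeroHom.coe_mk, Pi.sub_apply, sub_mul, mul_neg,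
    Finset.sum_sub_distrib, Finset.sum_neg_distrib, Pi.neg_apply]
  ring

lemma psi_zero_left (hζ : ζ ^ p = 1) (g : Fin n → ZMod p) :
    psi hζ 0 g = 1 := by
  rw [psi_apply]
  simp

lemma sum_psi [IsDomain R] (hζp : IsPrimitiveRoot ζ p) {w : Fin n → ZMod p} (hw : w ≠ 0) :
    ∑ g, psi hζp.pow_eq_one w g = 0 := by
  classical
  rw [AddChar.sum_eq_ite, if_neg]
  apply AddChar.ne_zero_iff.mpr
  obtain ⟨j, hj⟩ : ∃ j, w j ≠ 0 := by
    by_contra hc; push_neg at hc; exact hw (funext hc)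
  refine ⟨(Pi.single j 1 : Fin n → ZMod p), ?_⟩
  rw [psi_apply]
  have hval : (∑ i, w i * (Pi.single j 1 : Fin n → ZMod p) i) = w j := by
    simp [Pi.single_apply, mul_ite, Finset.sum_ite_eq']
  rw [hval]
  exact hζp.pow_ne_one_of_pos_of_lt
    (by simpa [ZMod.val_eq_zero] using hj : (w j).val ≠ 0) (ZMod.val_lt _)

theorem det_factor [IsDomain R] [CharZero R] (hζp : IsPrimitiveRoot ζ p)
    (a : (Fin n → ZMod p) → ℤ) :
    ((addGroupDet a : ℤ) : R)
      = ∏ w : Fin n → ZMod p, ∑ v : Fin n → ZMod p,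
          (a v : R) * psi hζp.pow_eq_one w (-v) := by
  classical
  set e1 := hζp.pow_eq_one with he1
  set S : (Fin n → ZMod p) → R := fun w => ∑ v, (a v : R) * psi e1 w (-v) with hS
  set M : Matrix (Fin n → ZMod p) (Fin n → ZMod p) R :=
    Matrix.of fun g h => ((a (g - h) : ℤ) : R) with hM
  set Q : Matrix (Fin n → ZMod p) (Fin n → ZMod p) R :=
    Matrix.of fun g w => psi e1 w g with hQ
  set Q' : Matrix (Fin n → ZMod p) (Fin n → ZMod p) R :=
    Matrix.of fun w g => psi e1 w (-g) with hQ'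
  have hMQ : M * Q = Q * Matrix.diagonal S := by
    ext g w
    rw [Matrix.mul_apply, Matrix.mul_diagonal]
    have step1 : ∑ h, M g h * Q h w = ∑ u, M g (g - u) * Q (g - u) w :=
      (Equiv.sum_comp (Equiv.subLeft g) (fun h => M g h * Q h w)).symm
    rw [step1]
    have step2 : ∀ u, M g (g - u) * Q (g - u) w
        = psi e1 w g * ((a u : R) * psi e1 w (-u)) := by
      intro u
      simp only [hM, hQ, Matrix.of_apply, sub_sub_cancel]
      rw [sub_eq_add_neg, AddChar.map_add_eq_mul]
      ring
    rw [Finset.sum_congr rfl fun u _ => step2 u, ← Finset.mul_sum]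
    rfl
  have hQ'Q : Q' * Q
      = Matrix.diagonal (fun _ => ((Fintype.card (Fin n → ZMod p) : ℕ) : R)) := by
    ext w w'
    rw [Matrix.mul_apply, Matrix.diagonal_apply]
    have : ∀ g, Q' w g * Q g w' = psi e1 (w' - w) g := fun g => psi_mul e1 w w' g
    rw [Finset.sum_congr rfl fun g _ => this g]
    by_cases hww : w = w'
    · subst hww
      simp [sub_self, psi_zero_left, Finset.card_univ]
    · rw [if_neg hww]
      exact sum_psi hζp (sub_ne_zero.mpr (Ne.symm hww))
  have hcard : ((Fintype.card (Fin n → ZMod p) : ℕ) : R) ≠ 0 :=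
    Nat.cast_ne_zero.mpr Fintype.card_ne_zero
  have hdetQ : Q.det ≠ 0 := by
    intro h0
    have hd := congrArg Matrix.det hQ'Q
    rw [Matrix.det_mul, h0, mul_zero, Matrix.det_diagonal, Finset.prod_const] at hd
    exact pow_ne_zero _ hcard hd.symm
  have h1 : M.det * Q.det = Q.det * ∏ w, S w := by
    rw [← Matrix.det_mul, hMQ, Matrix.det_mul, Matrix.det_diagonal]
  have h2 : M.det = ∏ w, S w := by
    rw [mul_comm Q.det] at h1
    exact mul_right_cancel₀ hdetQ h1
  rw [← h2, addGroupDet]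
  rw [show ((Matrix.det (Matrix.of fun g h : Fin n → ZMod p => a (g - h)) : ℤ) : R)
      = (Int.castRingHom R) (Matrix.det (Matrix.of fun g h : Fin n → ZMod p => a (g - h)))
      from rfl, RingHom.map_det]
  rfl

/-- `p` divides `(ζ - 1)^(p-1)` when `ζ` is a primitive `p`-th root of unity in a domain. -/
lemma p_dvd_sub_one_pow {R : Type*} [CommRing R] [IsDomain R] {p : ℕ} [hp : Fact p.Prime]
    {ζ : R} (hζ : IsPrimitiveRoot ζ p) : (p : R) ∣ (ζ - 1) ^ (p - 1) := by
  have : NeZero p := ⟨hp.out.ne_zero⟩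
  have hpos : 0 < p := hp.out.pos
  have he : ((p : ℕ) : R) = ∏ μ ∈ primitiveRoots p R, (1 - μ) := by
    have h2 := Polynomial.eval_one_cyclotomic_prime (R := R) (p := p)
    rw [Polynomial.cyclotomic_eq_prod_X_sub_primitiveRoots hζ, Polynomial.eval_prod] at h2
    simpa using h2.symm
  have hdvd : ((p : ℕ) : R) ∣ ∏ _μ ∈ primitiveRoots p R, (1 - ζ) := by
    rw [he]
    refine Finset.prod_dvd_prod_of_dvd _ _ (fun μ hμ => ?_)
    obtain ⟨i, _, hi⟩ := ((mem_primitiveRoots hpos).mp hμ).eq_pow_of_pow_eq_one hζ.pow_eq_one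
    simpa [hi] using sub_dvd_pow_sub_pow 1 μ i
  rw [Finset.prod_const, hζ.card_primitiveRoots, Nat.totient_prime hp.out] at hdvd
  have hrw : (ζ - 1 : R) ^ (p - 1) = (-1 : R) ^ (p - 1) * (1 - ζ) ^ (p - 1) := by
    rw [← mul_pow]; ring_nf
  rw [hrw]
  exact hdvd.mul_left _

/-- Descend an equation `D = k * e` from `𝓞 K` to `ℤ`. -/
lemma exists_int_of_cast_eq_mul {K : Type*} [Field K] [NumberField K] {D k : ℤ}
    (hk : k ≠ 0) (e : NumberField.RingOfIntegers K)
    (h : ((D : ℤ) : NumberField.RingOfIntegers K) = (k : NumberField.RingOfIntegers K) * e) :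
    ∃ m : ℤ, D = k * m ∧ ((m : ℤ) : NumberField.RingOfIntegers K) = e := by
  have hK := congrArg (algebraMap (NumberField.RingOfIntegers K) K) h
  rw [map_mul, map_intCast, map_intCast] at hK
  -- hK : (D : K) = (k : K) * e
  have hkK : ((k : ℤ) : K) ≠ 0 := Int.cast_ne_zero.mpr hk
  have hx : algebraMap ℚ K ((D : ℚ) / (k : ℚ)) = algebraMap (NumberField.RingOfIntegers K) K e := by
    rw [map_div₀, map_intCast, map_intCast, div_eq_iff hkK, hK]
    ring
  have hint : IsIntegral ℤ ((D : ℚ) / (k : ℚ)) := by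
    have h1 : IsIntegral ℤ (algebraMap ℚ K ((D : ℚ) / (k : ℚ))) := by
      rw [hx]; exact NumberField.RingOfIntegers.isIntegral_coe e
    exact (isIntegral_algebraMap_iff (algebraMap ℚ K).injective).mp h1
  obtain ⟨m, hm⟩ := IsIntegrallyClosed.isIntegral_iff.mp hint
  refine ⟨m, ?_, ?_⟩
  · have : (D : ℚ) = (k : ℚ) * m := by
      rw [show ((m : ℤ) : ℚ) = algebraMap ℤ ℚ m from rfl, hm]
      field_simp
    exact_mod_cast this
  · apply NumberField.RingOfIntegers.coe_injective
    show algebraMap (NumberField.RingOfIntegers K) K _ = algebraMap _ K e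
    rw [map_intCast, ← hx, ← hm]
    simp

end GpdAux


/-- Let `p` be a prime and `n ≥ 1`.  If `p` divides the group determinant of
`G = (ℤ/pℤ)ⁿ`, then `p^(1 + (pⁿ - 1)/(p - 1))` divides it. -/
theorem stmt2 (p : ℕ) [Fact p.Prime] (n : ℕ) (hn : 1 ≤ n)
    (a : (Fin n → ZMod p) → ℤ)
    (h : (p : ℤ) ∣ addGroupDet a) :
    (p : ℤ) ^ (1 + (p ^ n - 1) / (p - 1)) ∣ addGroupDet a := by
  classical
  have hp := (Fact.out : p.Prime)
  have : NeZero p := ⟨hp.ne_zero⟩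
  set q := (p ^ n - 1) / (p - 1) with hqdef
  have hdvdq : (p - 1) ∣ p ^ n - 1 := by simpa using Nat.sub_dvd_pow_sub_pow p 1 n
  have hq : (p - 1) * q = p ^ n - 1 := Nat.mul_div_cancel' hdvdq
  have hpn1 : 1 ≤ p ^ n := Nat.one_le_pow _ _ hp.pos
  have hpn : p ^ n = (p - 1) * q + 1 := by omega
  -- the cyclotomic field and its ring of integers
  set pp : ℕ+ := ⟨p, hp.pos⟩ with hpp
  haveI : Fact (Nat.Prime (pp : ℕ)) := ⟨hp⟩
  set K := CyclotomicField pp ℚ with hKdef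
  haveI : NeZero (pp : ℕ) := ⟨hp.ne_zero⟩
  haveI : IsCyclotomicExtension {(pp : ℕ)} ℚ K := by
    show IsCyclotomicExtension {(pp : ℕ)} ℚ (CyclotomicField pp ℚ)
    haveI : NeZero ((pp : ℕ) : ℚ) := ⟨by exact_mod_cast hp.ne_zero⟩
    exact CyclotomicField.isCyclotomicExtension (pp : ℕ) ℚ
  haveI : NumberField K := IsCyclotomicExtension.numberField {(pp : ℕ)} ℚ K
  set R := NumberField.RingOfIntegers K with hRdef
  have hζ : IsPrimitiveRoot (IsCyclotomicExtension.zeta pp ℚ K) pp :=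
    IsCyclotomicExtension.zeta_spec pp ℚ K
  have hζR : IsPrimitiveRoot (hζ.toInteger : R) p := hζ.toInteger_isPrimitiveRoot
  set ζ : R := hζ.toInteger with hzeta
  set lam : R := ζ - 1 with hlam
  have hprime : Prime lam := hζ.zeta_sub_one_prime'
  have hlp : lam ∣ ((p : ℕ) : R) := by
    have := hζ.toInteger_sub_one_dvd_prime'
    exact this
  -- the factorization of the group determinant
  set S : (Fin n → ZMod p) → R :=
    fun w => ∑ v, ((a v : ℤ) : R) * GpdAux.psi hζR.pow_eq_one w (-v) with hSdef
  have hfac : ((addGroupDet a : ℤ) : R) = ∏ w, S w := GpdAux.det_factor hζR a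
  set t : ℤ := ∑ v, a v with ht
  have hSt : ∀ w, lam ∣ S w - ((t : ℤ) : R) := by
    intro w
    have h1 : ((t : ℤ) : R) = ∑ v, ((a v : ℤ) : R) := by rw [ht]; exact Int.cast_sum _ _
    rw [hSdef, h1, ← Finset.sum_sub_distrib]
    refine Finset.dvd_sum (fun v _ => ?_)
    rw [← mul_sub_one]
    refine Dvd.dvd.mul_left ?_ _
    rw [GpdAux.psi_apply]
    simpa using sub_dvd_pow_sub_pow ζ 1 ((∑ i, w i * (-v) i).val)
  -- p ∣ D gives lam ∣ D, hence lam divides every S w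
  have hDR : lam ∣ ((addGroupDet a : ℤ) : R) := by
    obtain ⟨c, hc⟩ := h
    refine hlp.trans ⟨(c : R), ?_⟩
    rw [hc, Int.cast_mul, Int.cast_natCast]
  rw [hfac] at hDR
  obtain ⟨w₀, -, hw₀⟩ := hprime.exists_mem_finset_dvd hDR
  have hlt : lam ∣ ((t : ℤ) : R) := by
    have := dvd_sub hw₀ (hSt w₀)
    simpa using this
  have hall : ∀ w, lam ∣ S w := fun w => by
    have := dvd_add hlt (hSt w)
    simpa using this
  have hcardG : Fintype.card (Fin n → ZMod p) = p ^ n := by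
    simp [ZMod.card]
  have hpow : lam ^ (p ^ n) ∣ ∏ w, S w := by
    calc lam ^ (p ^ n) = ∏ _w : Fin n → ZMod p, lam := by
          rw [Finset.prod_const, Finset.card_univ, hcardG]
      _ ∣ ∏ w, S w := Finset.prod_dvd_prod_of_dvd _ _ (fun w _ => hall w)
  obtain ⟨c, hc⟩ : ∃ c, ((addGroupDet a : ℤ) : R) = lam ^ (p ^ n) * c := by
    obtain ⟨c, hc⟩ := hpow; exact ⟨c, by rw [hfac, hc]⟩
  obtain ⟨d, hd⟩ := GpdAux.p_dvd_sub_one_pow hζR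
  have hDcast : ((addGroupDet a : ℤ) : R) = (((p : ℤ) ^ q : ℤ) : R) * (d ^ q * (lam * c)) := by
    rw [hc, hpn, pow_add, pow_mul, pow_one, hlam, hd]
    push_cast
    ring
  obtain ⟨m, hm1, hm2⟩ := GpdAux.exists_int_of_cast_eq_mul
    (pow_ne_zero q (Int.natCast_ne_zero.mpr hp.ne_zero)) _ hDcast
  have hlm : lam ∣ ((m : ℤ) : R) := by
    rw [hm2]; exact ⟨d ^ q * c, by ring⟩
  have hpm : (p : ℤ) ∣ m := by
    by_contra hcon
    have h1 : ¬ (p ∣ m.natAbs) := fun hdd => hcon (Int.dvd_natAbs.mp (Int.natCast_dvd_natCast.mpr hdd))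
    have hcop : IsCoprime ((p : ℕ) : ℤ) m := by
      rw [Int.isCoprime_iff_gcd_eq_one]
      exact (Nat.Prime.coprime_iff_not_dvd hp).mpr h1
    obtain ⟨u, v, huv⟩ := hcop
    have hone : lam ∣ (1 : R) := by
      have h2 : lam ∣ ((u * p + v * m : ℤ) : R) := by
        rw [Int.cast_add, Int.cast_mul, Int.cast_mul]
        exact dvd_add ((by push_cast at hlp ⊢; exact hlp : lam ∣ ((p : ℕ) : R)).mul_left _)
          (hlm.mul_left _)
      rwa [huv, Int.cast_one] at h2
    exact hprime.not_unit (isUnit_of_dvd_one hone)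
  obtain ⟨m', hm'⟩ := hpm
  refine ⟨m', ?_⟩
  rw [hm1, hm']
  ring
end

section
/- Let p be an odd prime, let ζ = e^(2πi/p) be a primitive p-th root of unity, and let f ∈ ℤ[x]. Then both S = Σ_{j=0}^{p−1} f(ζ^j)^p and P = Π_{j=0}^{p−1} f(ζ^j) are rational integers, p divides S, and S/p ≡ P (mod p²); equivalently, p³ divides S − pP. -/
open Polynomial Finset


section helpers

variable {p : ℕ}

lemma zmod_sum_range [NeZero p] {M : Type*} [AddCommMonoid M] (g : ℕ → M) :
    ∑ j ∈ Finset.range p, g j = ∑ j : ZMod p, g (ZMod.val j) := by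
  refine Finset.sum_nbij' (fun j => ((j : ZMod p))) (fun i => i.val) ?_ ?_ ?_ ?_ ?_
  · intro a _; exact mem_univ _
  · intro a _; exact mem_range.2 (ZMod.val_lt a)
  · intro a ha; exact ZMod.val_cast_of_lt (mem_range.1 ha)
  · intro a _; exact ZMod.natCast_rightInverse a
  · intro a ha; rw [ZMod.val_cast_of_lt (mem_range.1 ha)]

lemma zmod_prod_range [NeZero p] {M : Type*} [CommMonoid M] (g : ℕ → M) :
    ∏ j ∈ Finset.range p, g j = ∏ j : ZMod p, g (ZMod.val j) := by
  refine Finset.prod_nbij' (fun j => ((j : ZMod p))) (fun i => i.val) ?_ ?_ ?_ ?_ ?_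
  · intro a _; exact mem_univ _
  · intro a _; exact mem_range.2 (ZMod.val_lt a)
  · intro a ha; exact ZMod.val_cast_of_lt (mem_range.1 ha)
  · intro a _; exact ZMod.natCast_rightInverse a
  · intro a ha; rw [ZMod.val_cast_of_lt (mem_range.1 ha)]

lemma pow_congr_zmod [NeZero p] {ζ : ℂ} (hζ : IsPrimitiveRoot ζ p) {a b : ℕ}
    (h : (a : ZMod p) = (b : ZMod p)) : ζ ^ a = ζ ^ b := by
  have hmod : a % p = b % p := by rwa [ZMod.natCast_eq_natCast_iff'] at h
  have key : ∀ m : ℕ, ζ ^ m = ζ ^ (m % p) := by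
    intro m
    conv_lhs => rw [← Nat.div_add_mod m p]
    rw [pow_add, pow_mul, hζ.pow_eq_one, one_pow, one_mul]
  rw [key a, key b, hmod]

lemma geom_root (hp : p.Prime) {ζ : ℂ} (hζ : IsPrimitiveRoot ζ p) (m : ℕ) :
    ∑ j ∈ Finset.range p, (ζ ^ m) ^ j = if p ∣ m then (p : ℂ) else 0 := by
  by_cases h : p ∣ m
  · rw [if_pos h, (hζ.pow_eq_one_iff_dvd m).2 h]
    simp
  · rw [if_neg h]
    have hne : ζ ^ m ≠ 1 := fun hh => h ((hζ.pow_eq_one_iff_dvd m).1 hh)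
    rw [geom_sum_eq hne, ← pow_mul, mul_comm m p, pow_mul, hζ.pow_eq_one, one_pow,
      sub_self, zero_div]

end helpers


lemma orbit_sum (p : ℕ) (hp : p.Prime) {α : Type*} [DecidableEq α] (σ : α → α)
    (F : α → ℂ) (s : Finset α) (hcl : ∀ x ∈ s, σ x ∈ s) (hinv : ∀ x ∈ s, F (σ x) = F x)
    (hfree : ∀ x ∈ s, σ x ≠ x) (hper : ∀ x ∈ s, σ^[p] x = x) :
    ∃ R : Finset α, R ⊆ s ∧ ∑ x ∈ s, F x = p * ∑ x ∈ R, F x := by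
  induction s using Finset.strongInduction with
  | _ s ih =>
  rcases s.eq_empty_or_nonempty with rfl | ⟨x, hx⟩
  · exact ⟨∅, by simp⟩
  · -- basic iterate facts
    have hmem : ∀ m, ∀ y ∈ s, σ^[m] y ∈ s := by
      intro m; induction m with
      | zero => simp
      | succ m ihm => intro y hy
                      rw [Function.iterate_succ_apply']
                      exact hcl _ (ihm y hy)
    have hpk : ∀ k, ∀ y ∈ s, σ^[p * k] y = y := by
      intro k; induction k with
      | zero => simp
      | succ k ihk => intro y hy
                      rw [Nat.mul_succ, Function.iterate_add_apply]
                      rw [hper y hy]; exact ihk y hy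
    have hmod : ∀ m, ∀ y ∈ s, σ^[m] y = σ^[m % p] y := by
      intro m y hy
      conv_lhs => rw [← Nat.div_add_mod m p]
      rw [Nat.add_comm, Function.iterate_add_apply, hpk _ y hy]
    have hFiter : ∀ m, ∀ y ∈ s, F (σ^[m] y) = F y := by
      intro m; induction m with
      | zero => simp
      | succ m ihm => intro y hy
                      rw [Function.iterate_succ_apply', hinv _ (hmem m y hy)]
                      exact ihm y hy
    -- the orbit of x
    set O : Finset α := (range p).image (fun t => σ^[t] x) with hO
    have hinjO : Set.InjOn (fun t => σ^[t] x) (range p) := by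
      intro a ha b hb hab
      simp only [mem_coe, mem_range] at ha hb
      by_contra hne
      -- wlog a < b
      have key : ∀ a b : ℕ, a < b → b < p → σ^[a] x = σ^[b] x → False := by
        intro a b hlt hbp heq
        have hd : σ^[p - b + a] x = x := by
          have h1 : σ^[p - b] (σ^[b] x) = x := by
            rw [← Function.iterate_add_apply, Nat.sub_add_cancel hbp.le]
            exact hper x hx
          rw [← heq, ← Function.iterate_add_apply] at h1
          exact h1
        set d := p - b + a with hdd
        have hd0 : 0 < d := by omega
        have hdp : d < p := by omega
        have hcop' : Nat.Coprime d p := (hp.coprime_iff_not_dvd.2 (Nat.not_dvd_of_pos_of_lt hd0 hdp)).symm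
        obtain ⟨u, -, hu⟩ := Nat.exists_mul_mod_eq_one_of_coprime hcop' hp.one_lt
        have hdu : ∀ k, σ^[d * k] x = x := by
          intro k; induction k with
          | zero => simp
          | succ k ihk => rw [Nat.mul_succ, Function.iterate_add_apply, hd, ihk]
        have : σ^[d * u] x = σ x := by
          rw [hmod _ x hx, hu]; simp
        rw [hdu u] at this
        exact hfree x hx this.symm
      rcases Nat.lt_or_ge a b with h | h
      · exact key a b h hb hab
      · exact key b a (by omega) ha hab.symm
    have hcardO : O.card = p := by
      rw [hO, Finset.card_image_of_injOn hinjO, card_range]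
    have hOsub : O ⊆ s := by
      intro y hy
      simp only [hO, mem_image, mem_range] at hy
      obtain ⟨t, ht, rfl⟩ := hy
      exact hmem t x hx
    have hxO : x ∈ O := by
      simp only [hO, mem_image, mem_range]
      exact ⟨0, hp.pos, rfl⟩
    have hsumO : ∑ y ∈ O, F y = p * F x := by
      rw [hO, Finset.sum_image hinjO]
      rw [Finset.sum_congr rfl (fun t ht => hFiter t x hx)]
      simp [mul_comm]
    -- closure of complement
    have hOcl : ∀ y ∈ s, σ y ∈ O → y ∈ O := by
      intro y hy hσy
      simp only [hO, mem_image, mem_range] at hσy ⊢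
      obtain ⟨t, ht, hts⟩ := hσy
      refine ⟨(p - 1 + t) % p, Nat.mod_lt _ hp.pos, ?_⟩
      rw [← hmod _ x hx, Function.iterate_add_apply, hts,
        ← Function.iterate_succ_apply, show (p-1).succ = p by omega, hper y hy]
    have hss : s \ O ⊂ s := Finset.sdiff_ssubset hOsub ⟨x, hxO⟩
    obtain ⟨R', hR's, hR'⟩ := ih (s \ O) hss
      (fun y hy => by
        rcases mem_sdiff.1 hy with ⟨hys, hyO⟩
        exact mem_sdiff.2 ⟨hcl y hys, fun h => hyO (hOcl y hys h)⟩)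
      (fun y hy => hinv y (mem_sdiff.1 hy).1)
      (fun y hy => hfree y (mem_sdiff.1 hy).1)
      (fun y hy => hper y (mem_sdiff.1 hy).1)
    have hxR' : x ∉ R' := fun h => (mem_sdiff.1 (hR's h)).2 hxO
    refine ⟨insert x R', ?_, ?_⟩
    · intro y hy
      rcases mem_insert.1 hy with rfl | hy
      · exact hx
      · exact (mem_sdiff.1 (hR's hy)).1
    · rw [← Finset.sum_sdiff hOsub, hR', hsumO, Finset.sum_insert hxR']
      ring


lemma key_dvd (p : ℕ) (hp : p.Prime) {ζ : ℂ} (hζ : IsPrimitiveRoot ζ p)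
    {β : Type*} (R : Finset β) (w : β → ℤ) (e : β → ℕ) (m : ℤ)
    (h : (m : ℂ) = ∑ x ∈ R, (w x : ℂ) * (1 - ζ ^ e x)) : (p : ℤ) ∣ m := by
  haveI : Fact p.Prime := ⟨hp⟩
  set g : ℤ[X] := (∑ x ∈ R, C (w x) * (1 - X ^ e x)) - C m with hg
  have hint : IsIntegral ℤ ζ := hζ.isIntegral hp.pos
  have haev : aeval ζ g = 0 := by
    rw [hg]
    simp only [map_sub, map_sum, map_mul, map_one, map_pow, aeval_X, aeval_C]
    simp only [algebraMap_int_eq, eq_intCast]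
    rw [← h]; ring
  have hdvd : minpoly ℤ ζ ∣ g := minpoly.isIntegrallyClosed_dvd hint haev
  rw [← Polynomial.cyclotomic_eq_minpoly hζ hp.pos] at hdvd
  obtain ⟨q, hq⟩ := hdvd
  have h1 := congrArg (Polynomial.eval 1) hq
  rw [hg] at h1
  simp only [eval_sub, eval_finset_sum, eval_mul, eval_one, eval_pow, eval_X, eval_C,
    Polynomial.eval_one_cyclotomic_prime, one_pow, sub_self, mul_zero, Finset.sum_const_zero,
    zero_sub] at h1
  exact ⟨-q.eval 1, by rw [mul_neg, ← h1, neg_neg]⟩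


/-- Let `p` be an odd prime, `ζ = e^(2πi/p)`, and `f ∈ ℤ[x]`.  Then
`S = Σ_{j<p} f(ζ^j)^p` and `P = Π_{j<p} f(ζ^j)` are rational integers,
`p ∣ S`, and `S/p ≡ P (mod p²)`, i.e. `p³ ∣ S - pP`. -/
theorem stmt12 (p : ℕ) (hp : p.Prime) (hodd : Odd p) (f : Polynomial ℤ)
    (ζ : ℂ) (hζ : ζ = Complex.exp (2 * Real.pi * Complex.I / p)) :
    ∃ S P : ℤ,
      (S : ℂ) = ∑ j ∈ Finset.range p, (aeval (ζ ^ j) f) ^ p ∧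
      (P : ℂ) = ∏ j ∈ Finset.range p, aeval (ζ ^ j) f ∧
      (p : ℤ) ∣ S ∧ (p : ℤ) ^ 3 ∣ S - p * P := by
  haveI : Fact p.Prime := ⟨hp⟩
  haveI : NeZero p := ⟨hp.ne_zero⟩
  have hζprim : IsPrimitiveRoot ζ p := hζ ▸ Complex.isPrimitiveRoot_exp p hp.ne_zero
  have hpC : (p : ℂ) ≠ 0 := Nat.cast_ne_zero.2 hp.ne_zero
  set n := f.natDegree with hn
  set c : ℕ → ℤ := fun i => f.coeff i with hc
  set W : (ZMod p → ℕ) → ℤ := fun k => ∏ i : ZMod p, c (k i) with hW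
  set K : (ZMod p → ℕ) → ℕ := fun k => ∑ i : ZMod p, k i with hK
  set E : (ZMod p → ℕ) → ℕ := fun k => ∑ i : ZMod p, (ZMod.val i) * k i with hE
  set T : Finset (ZMod p → ℕ) := Fintype.piFinset (fun _ => Finset.range (n+1)) with hT
  set A : Finset (ZMod p → ℕ) := T.filter (fun k => p ∣ K k) with hA
  have hcard : (Finset.univ : Finset (ZMod p)).card = p := by
    rw [Finset.card_univ, ZMod.card]
  have hvi : ∀ i : ZMod p, ((ZMod.val i : ℕ) : ZMod p) = i := fun i =>
    ZMod.natCast_rightInverse i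
  -- aeval expansion
  have haev : ∀ z : ℂ, aeval z f = ∑ i ∈ Finset.range (n+1), (c i : ℂ) * z ^ i := by
    intro z
    rw [Polynomial.aeval_eq_sum_range]
    exact Finset.sum_congr rfl (fun i _ => by rw [zsmul_eq_mul])
  -- cast of E and K
  have hEbar : ∀ k : ZMod p → ℕ, ((E k : ℕ) : ZMod p) = ∑ i : ZMod p, i * (k i : ZMod p) := by
    intro k
    rw [hE]
    push_cast
    exact Finset.sum_congr rfl (fun i _ => by rw [hvi])
  have hKbar : ∀ k : ZMod p → ℕ, ((K k : ℕ) : ZMod p) = ∑ i : ZMod p, (k i : ZMod p) := by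
    intro k; rw [hK]; push_cast; rfl
  have hKA : ∀ k ∈ A, ((K k : ℕ) : ZMod p) = 0 := by
    intro k hk
    rw [ZMod.natCast_eq_zero_iff]
    exact (Finset.mem_filter.1 hk).2
  ----------------------------------------------------------------
  -- S-side expansion
  ----------------------------------------------------------------
  have hS : ∑ j ∈ Finset.range p, (aeval (ζ ^ j) f) ^ p
      = (p : ℂ) * ∑ k ∈ A, (W k : ℂ) := by
    have step1 : ∀ j : ℕ, (aeval (ζ ^ j) f) ^ p = ∑ k ∈ T, (W k : ℂ) * (ζ ^ (K k)) ^ j := by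
      intro j
      rw [haev (ζ ^ j)]
      have h1 : (∑ i ∈ Finset.range (n+1), (c i : ℂ) * (ζ ^ j) ^ i) ^ p
          = ∏ _l : ZMod p, (∑ i ∈ Finset.range (n+1), (c i : ℂ) * (ζ ^ j) ^ i) := by
        rw [Finset.prod_const, hcard]
      rw [h1, Finset.prod_univ_sum]
      refine Finset.sum_congr rfl (fun k _ => ?_)
      rw [Finset.prod_mul_distrib, Finset.prod_pow_eq_pow_sum]
      rw [hW, hK]
      push_cast
      rw [← pow_mul, ← pow_mul, mul_comm j]
    calc ∑ j ∈ Finset.range p, (aeval (ζ ^ j) f) ^ p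
        = ∑ j ∈ Finset.range p, ∑ k ∈ T, (W k : ℂ) * (ζ ^ (K k)) ^ j :=
          Finset.sum_congr rfl (fun j _ => step1 j)
      _ = ∑ k ∈ T, ∑ j ∈ Finset.range p, (W k : ℂ) * (ζ ^ (K k)) ^ j := Finset.sum_comm
      _ = ∑ k ∈ T, (W k : ℂ) * (if p ∣ K k then (p : ℂ) else 0) := by
          refine Finset.sum_congr rfl (fun k _ => ?_)
          rw [← Finset.mul_sum, geom_root hp hζprim]
      _ = (p : ℂ) * ∑ k ∈ A, (W k : ℂ) := by
          rw [hA, Finset.sum_filter, Finset.mul_sum]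
          refine Finset.sum_congr rfl (fun k _ => ?_)
          split_ifs <;> simp [mul_comm]
  ----------------------------------------------------------------
  -- rotation maps
  ----------------------------------------------------------------
  set ρ : ZMod p → (ZMod p → ℕ) → (ZMod p → ℕ) := fun t k i => k (i + t) with hρ
  have hρT : ∀ (t : ZMod p) (k : ZMod p → ℕ), k ∈ T → ρ t k ∈ T := by
    intro t k hk
    rw [hT, Fintype.mem_piFinset] at hk ⊢
    intro i; exact hk _
  have hρW : ∀ (t : ZMod p) (k : ZMod p → ℕ), W (ρ t k) = W k := by
    intro t k
    exact Equiv.prod_comp (Equiv.addRight t) (fun i => c (k i))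
  have hρK : ∀ (t : ZMod p) (k : ZMod p → ℕ), K (ρ t k) = K k := by
    intro t k
    exact Equiv.sum_comp (Equiv.addRight t) (fun i => k i)
  have hρE : ∀ (t : ZMod p) (k : ZMod p → ℕ),
      ((E (ρ t k) : ℕ) : ZMod p) = (E k : ZMod p) - t * (K k : ZMod p) := by
    intro t k
    rw [hEbar, hEbar, hKbar]
    have hre : ∑ i : ZMod p, i * ((ρ t k) i : ZMod p)
        = ∑ j : ZMod p, (j - t) * (k j : ZMod p) := by
      have := Equiv.sum_comp (Equiv.addRight t) (fun j => (j - t) * (k j : ZMod p))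
      rw [← this]
      refine Finset.sum_congr rfl (fun i _ => ?_)
      simp [hρ]
    rw [hre]
    rw [Finset.mul_sum, ← Finset.sum_sub_distrib]
    exact Finset.sum_congr rfl (fun i _ => by ring)
  ----------------------------------------------------------------
  -- P-side expansion
  ----------------------------------------------------------------
  have hPexp : ∏ j ∈ Finset.range p, aeval (ζ ^ j) f
      = ∑ k ∈ T, (W k : ℂ) * ζ ^ E k := by
    rw [zmod_prod_range (fun j => aeval (ζ ^ j) f)]
    calc ∏ j : ZMod p, aeval (ζ ^ (ZMod.val j)) f
        = ∏ j : ZMod p, ∑ i ∈ Finset.range (n+1), (c i : ℂ) * (ζ ^ (ZMod.val j)) ^ i :=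
          Finset.prod_congr rfl (fun j _ => haev _)
      _ = ∑ k ∈ T, ∏ j : ZMod p, ((c (k j) : ℂ) * (ζ ^ (ZMod.val j)) ^ (k j)) :=
          Finset.prod_univ_sum _ _
      _ = ∑ k ∈ T, (W k : ℂ) * ζ ^ E k := by
          refine Finset.sum_congr rfl (fun k _ => ?_)
          rw [Finset.prod_mul_distrib]
          have h2 : ∏ j : ZMod p, (ζ ^ (ZMod.val j)) ^ (k j) = ζ ^ E k := by
            rw [hE]
            rw [← Finset.prod_pow_eq_pow_sum]
            exact Finset.prod_congr rfl (fun j _ => by rw [← pow_mul])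
          rw [h2, hW]
          push_cast
          ring
  have hco : Nat.Coprime p (p - 1) := by
    have h2 := hp.two_le
    exact hp.coprime_iff_not_dvd.2 (Nat.not_dvd_of_pos_of_lt (by omega) (by omega))
  have havg : ∑ k ∈ T, (W k : ℂ) * ζ ^ E k = ∑ k ∈ A, (W k : ℂ) * ζ ^ E k := by
    apply mul_left_cancel₀ hpC
    have hmain : ∀ t : ZMod p,
        ∑ k ∈ T, (W k : ℂ) * ζ ^ (E k + ((p-1) * K k) * (ZMod.val t))
          = ∑ k ∈ T, (W k : ℂ) * ζ ^ E k := by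
      intro t
      refine Finset.sum_nbij' (ρ t) (ρ (-t)) (fun a ha => hρT t a ha)
        (fun a ha => hρT (-t) a ha) ?_ ?_ ?_
      · intro a _; funext i; simp [hρ]
      · intro a _; funext i; simp [hρ]
      · intro a _
        rw [hρW]
        congr 1
        refine (pow_congr_zmod hζprim ?_).symm
        rw [hρE]
        push_cast [hp.one_le, Nat.cast_sub hp.one_le]
        rw [ZMod.natCast_self, hvi]
        ring
    calc (p : ℂ) * ∑ k ∈ T, (W k : ℂ) * ζ ^ E k
        = ∑ t : ZMod p, ∑ k ∈ T, (W k : ℂ) * ζ ^ E k := by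
          rw [Finset.sum_const, hcard, nsmul_eq_mul]
      _ = ∑ t : ZMod p, ∑ k ∈ T, (W k : ℂ) * ζ ^ (E k + ((p-1) * K k) * (ZMod.val t)) :=
          Finset.sum_congr rfl (fun t _ => (hmain t).symm)
      _ = ∑ k ∈ T, (W k : ℂ) * (ζ ^ E k * ∑ t : ZMod p, (ζ ^ ((p-1) * K k)) ^ (ZMod.val t)) := by
          rw [Finset.sum_comm]
          refine Finset.sum_congr rfl (fun k _ => ?_)
          simp only [Finset.mul_sum]
          refine Finset.sum_congr rfl (fun t _ => ?_)
          rw [pow_add, pow_mul]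
      _ = ∑ k ∈ T, (W k : ℂ) * (ζ ^ E k * (if p ∣ (p-1) * K k then (p : ℂ) else 0)) := by
          refine Finset.sum_congr rfl (fun k _ => ?_)
          rw [← zmod_sum_range (fun j => (ζ ^ ((p-1) * K k)) ^ j), geom_root hp hζprim]
      _ = ∑ k ∈ T, (W k : ℂ) * (ζ ^ E k * (if p ∣ K k then (p : ℂ) else 0)) := by
          refine Finset.sum_congr rfl (fun k _ => ?_)
          congr 1
          congr 1
          refine if_congr ?_ rfl rfl
          exact ⟨fun h => hco.dvd_of_dvd_mul_left h, fun h => h.mul_left _⟩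
      _ = (p : ℂ) * ∑ k ∈ A, (W k : ℂ) * ζ ^ E k := by
          rw [hA, Finset.sum_filter, Finset.mul_sum]
          refine Finset.sum_congr rfl (fun k _ => ?_)
          split_ifs <;> ring
  ----------------------------------------------------------------
  -- P is an integer : fiberwise
  ----------------------------------------------------------------
  set M : ZMod p → ℤ := fun e => ∑ k ∈ A.filter (fun k => ((E k : ℕ) : ZMod p) = e), W k with hM
  have hfib : ∑ k ∈ A, (W k : ℂ) * ζ ^ E k = ∑ e : ZMod p, (M e : ℂ) * ζ ^ (ZMod.val e) := by
    rw [← Finset.sum_fiberwise A (fun k => ((E k : ℕ) : ZMod p)) (fun k => (W k : ℂ) * ζ ^ E k)]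
    refine Finset.sum_congr rfl (fun e _ => ?_)
    have h1 : ∀ k ∈ A.filter (fun k => ((E k : ℕ) : ZMod p) = e),
        (W k : ℂ) * ζ ^ E k = (W k : ℂ) * ζ ^ (ZMod.val e) := by
      intro k hk
      have he := (Finset.mem_filter.1 hk).2
      congr 1
      refine pow_congr_zmod hζprim ?_
      rw [he, hvi]
    rw [Finset.sum_congr rfl h1, ← Finset.sum_mul, hM]
    push_cast
    ring
  have hgenE : ∀ (v : ZMod p), v ≠ 0 → ∀ (k : ZMod p → ℕ),
      ((E (fun i => k (v * i)) : ℕ) : ZMod p) = v⁻¹ * ((E k : ℕ) : ZMod p) := by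
    intro v hv k
    rw [hEbar, hEbar, Finset.mul_sum]
    have h2 := Equiv.sum_comp (Equiv.mulLeft₀ v hv) (fun j => v⁻¹ * (j * ((k j : ℕ) : ZMod p)))
    simp only [Equiv.mulLeft₀_apply] at h2
    rw [← h2]
    refine Finset.sum_congr rfl (fun i _ => ?_)
    rw [← mul_assoc, inv_mul_cancel_left₀ hv]
  have hgenW : ∀ (v : ZMod p), v ≠ 0 → ∀ (k : ZMod p → ℕ),
      W (fun i => k (v * i)) = W k := by
    intro v hv k
    have h2 := Equiv.prod_comp (Equiv.mulLeft₀ v hv) (fun j => c (k j))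
    simp only [Equiv.mulLeft₀_apply] at h2
    exact h2
  have hgenK : ∀ (v : ZMod p), v ≠ 0 → ∀ (k : ZMod p → ℕ),
      K (fun i => k (v * i)) = K k := by
    intro v hv k
    have h2 := Equiv.sum_comp (Equiv.mulLeft₀ v hv) (fun j => k j)
    simp only [Equiv.mulLeft₀_apply] at h2
    exact h2
  have hgenA : ∀ (v : ZMod p), v ≠ 0 → ∀ k ∈ A, (fun i => k (v * i)) ∈ A := by
    intro v hv k hk
    rw [hA, Finset.mem_filter] at hk ⊢
    constructor
    · rw [hT, Fintype.mem_piFinset] at hk ⊢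
      exact fun i => hk.1 _
    · rw [hgenK v hv]; exact hk.2
  have hTmul : ∀ (u : ZMod p), u ≠ 0 → ∀ (e : ZMod p), M e = M (u * e) := by
    intro u hu e
    have hu' : u⁻¹ ≠ 0 := inv_ne_zero hu
    simp only [hM]
    refine Finset.sum_nbij' (fun k => (fun i => k (u⁻¹ * i))) (fun k => (fun i => k (u * i)))
      ?_ ?_ ?_ ?_ ?_
    · intro a ha
      rw [Finset.mem_filter] at ha ⊢
      refine ⟨hgenA u⁻¹ hu' a ha.1, ?_⟩
      rw [hgenE u⁻¹ hu' a, inv_inv, ha.2]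
    · intro a ha
      rw [Finset.mem_filter] at ha ⊢
      refine ⟨hgenA u hu a ha.1, ?_⟩
      rw [hgenE u hu a, ha.2, inv_mul_cancel_left₀ hu]
    · intro a _; funext i; simp only [inv_mul_cancel_left₀ hu]
    · intro a _; funext i; simp only [mul_inv_cancel_left₀ hu]
    · intro a _
      exact (hgenW u⁻¹ hu' a).symm
  have hM1 : ∀ e : ZMod p, e ≠ 0 → M e = M 1 := by
    intro e he
    have := hTmul e he 1
    rw [mul_one] at this
    exact this.symm
  have hPZval : ∑ e : ZMod p, (M e : ℂ) * ζ ^ (ZMod.val e) = ((M 0 - M 1 : ℤ) : ℂ) := by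
    have hsum0 : ∑ e : ZMod p, ζ ^ (ZMod.val e) = 0 := by
      rw [← zmod_sum_range (fun j => ζ ^ j)]
      have h1 := geom_root hp hζprim 1
      rw [if_neg (fun h => by
        have h5 := Nat.le_of_dvd one_pos h
        have h6 := hp.one_lt
        omega)] at h1
      simpa using h1
    have herase : ∑ e ∈ Finset.univ.erase (0 : ZMod p), ζ ^ (ZMod.val e) = -1 := by
      have h2 := Finset.sum_erase_add Finset.univ (fun e : ZMod p => ζ ^ (ZMod.val e))
        (Finset.mem_univ (0 : ZMod p))
      rw [hsum0] at h2
      simp only [ZMod.val_zero, pow_zero] at h2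
      linear_combination h2
    have h3 := Finset.sum_erase_add Finset.univ (fun e : ZMod p => (M e : ℂ) * ζ ^ (ZMod.val e))
      (Finset.mem_univ (0 : ZMod p))
    rw [← h3]
    have h4 : ∑ e ∈ Finset.univ.erase (0 : ZMod p), (M e : ℂ) * ζ ^ (ZMod.val e)
        = (M 1 : ℂ) * ∑ e ∈ Finset.univ.erase (0 : ZMod p), ζ ^ (ZMod.val e) := by
      rw [Finset.mul_sum]
      refine Finset.sum_congr rfl (fun e he => ?_)
      rw [hM1 e (Finset.mem_erase.1 he).1]
    rw [h4, herase]
    simp only [ZMod.val_zero, pow_zero]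
    push_cast
    ring
  ----------------------------------------------------------------
  -- the difference and its p-divisibility
  ----------------------------------------------------------------
  set D : ℤ := (∑ k ∈ A, W k) - (M 0 - M 1) with hD
  have hDC : (D : ℂ) = ∑ k ∈ A, (W k : ℂ) * (1 - ζ ^ E k) := by
    have : ∑ k ∈ A, (W k : ℂ) * (1 - ζ ^ E k)
        = ∑ k ∈ A, (W k : ℂ) - ∑ k ∈ A, (W k : ℂ) * ζ ^ E k := by
      rw [← Finset.sum_sub_distrib]
      exact Finset.sum_congr rfl (fun k _ => by ring)
    rw [this, hfib, hPZval, hD]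
    push_cast
    ring
  -- split into constant and nonconstant tuples
  have hsplit : ∑ k ∈ A, (W k : ℂ) * (1 - ζ ^ E k)
      = ∑ k ∈ A.filter (fun k => ¬ (∀ i, k i = k 0)), (W k : ℂ) * (1 - ζ ^ E k) := by
    rw [← Finset.sum_filter_add_sum_filter_not A (fun k => ∀ i, k i = k 0)
      (fun k => (W k : ℂ) * (1 - ζ ^ E k))]
    have hzero : ∑ k ∈ A.filter (fun k => ∀ i, k i = k 0), (W k : ℂ) * (1 - ζ ^ E k) = 0 := by
      refine Finset.sum_eq_zero (fun k hk => ?_)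
      obtain ⟨hkA, hkc⟩ := Finset.mem_filter.1 hk
      have hdvd : p ∣ E k := by
        have hEk : E k = (∑ j ∈ Finset.range p, j) * k 0 := by
          rw [hE, zmod_sum_range (fun j => j), Finset.sum_mul]
          exact Finset.sum_congr rfl (fun i _ => by rw [hkc i])
        have h2 : p ∣ ∑ j ∈ Finset.range p, j := by
          have h3 := Finset.sum_range_id_mul_two p
          have hco2 : Nat.Coprime p 2 := hp.coprime_iff_not_dvd.2 (by
            intro h2d
            have h5 := Nat.odd_iff.1 hodd
            have h6 := (Nat.prime_dvd_prime_iff_eq hp Nat.prime_two).1 h2d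
            omega)
          exact hco2.dvd_of_dvd_mul_right ⟨p - 1, h3⟩
        rw [hEk]
        exact Dvd.dvd.mul_right h2 (k 0)
      have hone : ζ ^ E k = 1 := by
        have h6 : ((E k : ℕ) : ZMod p) = ((0 : ℕ) : ZMod p) := by
          rw [Nat.cast_zero, ZMod.natCast_eq_zero_iff]
          exact hdvd
        have := pow_congr_zmod hζprim h6
        simpa using this
      rw [hone]
      ring
    rw [hzero, zero_add]
  have hiter : ∀ (m : ℕ) (k : ZMod p → ℕ), (ρ 1)^[m] k = fun i => k (i + (m : ZMod p)) := by
    intro m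
    induction m with
    | zero => intro k; funext i; simp
    | succ m ihm =>
        intro k
        rw [Function.iterate_succ_apply, ihm]
        funext i
        simp only [hρ]
        push_cast
        rw [add_assoc]
  have hcl1 : ∀ k ∈ A.filter (fun k => ¬ (∀ i, k i = k 0)),
      ρ 1 k ∈ A.filter (fun k => ¬ (∀ i, k i = k 0)) := by
    intro k hk
    obtain ⟨hkA, hknc⟩ := Finset.mem_filter.1 hk
    refine Finset.mem_filter.2 ⟨?_, ?_⟩
    · rw [hA, Finset.mem_filter] at hkA ⊢
      exact ⟨hρT 1 k hkA.1, by rw [hρK]; exact hkA.2⟩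
    · intro hcon
      apply hknc
      have h1 : ∀ i : ZMod p, k (i + 1) = k 1 := by
        intro i
        have := hcon i
        simp only [hρ] at this
        rwa [zero_add] at this
      have h2 : ∀ j : ZMod p, k j = k 1 := by
        intro j
        have := h1 (j - 1)
        rwa [sub_add_cancel] at this
      intro i
      rw [h2 i, h2 0]
  have hcl2 : ∀ k ∈ A.filter (fun k => ¬ (∀ i, k i = k 0)),
      (W (ρ 1 k) : ℂ) * (1 - ζ ^ E (ρ 1 k)) = (W k : ℂ) * (1 - ζ ^ E k) := by
    intro k hk
    obtain ⟨hkA, _⟩ := Finset.mem_filter.1 hk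
    rw [hρW]
    have hEeq : ζ ^ E (ρ 1 k) = ζ ^ E k := by
      refine pow_congr_zmod hζprim ?_
      rw [hρE, hKA k hkA]
      ring
    rw [hEeq]
  have hcl3 : ∀ k ∈ A.filter (fun k => ¬ (∀ i, k i = k 0)), ρ 1 k ≠ k := by
    intro k hk hfix
    obtain ⟨_, hknc⟩ := Finset.mem_filter.1 hk
    apply hknc
    have h1 : ∀ i : ZMod p, k (i + 1) = k i := by
      intro i
      have := congrFun hfix i
      simpa only [hρ] using this
    have h2 : ∀ m : ℕ, k ((m : ℕ) : ZMod p) = k 0 := by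
      intro m
      induction m with
      | zero => simp
      | succ m ihm =>
          push_cast
          rw [h1 ((m : ℕ) : ZMod p)]
          push_cast at ihm
          exact ihm
    intro i
    have := h2 (ZMod.val i)
    rwa [hvi] at this
  have hcl4 : ∀ k ∈ A.filter (fun k => ¬ (∀ i, k i = k 0)), (ρ 1)^[p] k = k := by
    intro k _
    rw [hiter p k]
    funext i
    rw [ZMod.natCast_self, add_zero]
  have horb : ∃ R : Finset (ZMod p → ℕ),
      ∑ k ∈ A.filter (fun k => ¬ (∀ i, k i = k 0)), (W k : ℂ) * (1 - ζ ^ E k)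
        = (p : ℂ) * ∑ k ∈ R, (W k : ℂ) * (1 - ζ ^ E k) := by
    have main := orbit_sum p hp (ρ 1) (fun k => (W k : ℂ) * (1 - ζ ^ E k))
      (A.filter (fun k => ¬ (∀ i, k i = k 0))) hcl1 hcl2 hcl3 hcl4
    exact main.imp (fun R h => h.2)
  obtain ⟨R, hR⟩ := horb
  have hpD : (p : ℤ) ∣ D := key_dvd p hp hζprim A W E D hDC
  obtain ⟨G, hG⟩ := hpD
  have hGC : (G : ℂ) = ∑ k ∈ R, (W k : ℂ) * (1 - ζ ^ E k) := by
    have h1 : (D : ℂ) = (p : ℂ) * ∑ k ∈ R, (W k : ℂ) * (1 - ζ ^ E k) := by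
      rw [hDC, hsplit, hR]
    have h2 : (D : ℂ) = (p : ℂ) * (G : ℂ) := by rw [hG]; push_cast; ring
    exact mul_left_cancel₀ hpC (h2.symm.trans h1)
  have hpG : (p : ℤ) ∣ G := key_dvd p hp hζprim R W E G hGC
  obtain ⟨G2, hG2⟩ := hpG
  ----------------------------------------------------------------
  refine ⟨p * ∑ k ∈ A, W k, M 0 - M 1, ?_, ?_, Dvd.intro _ rfl, ?_⟩
  · push_cast
    rw [hS]
  · rw [hPexp, havg, hfib, hPZval]
  · refine ⟨G2, ?_⟩
    have : (p : ℤ) * (∑ k ∈ A, W k) - p * (M 0 - M 1) = p * D := by rw [hD]; ring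
    rw [this, hG, hG2]; ring
end

section
/- Let p ≥ 5 be a prime, let k ≥ 0 be an integer, and let A₁, A₂, A₃ be integers none of which is divisible by p. Let ω = e^(2πi/p). Then the integer N = Π_{i=0}^{p−1} Π_{j=0}^{p−1} ( A₁ p^(1+k) + A₂(1 − ω^i) + A₃(1 − ω^j)² ) is exactly divisible by p^(p+3+k), i.e., p^(p+3+k) ∣ N and p^(p+4+k) ∤ N. -/
open Polynomial NumberField

lemma aux_int_dvd_of_cast_dvd {K : Type*} [Field K] [CharZero K] (a b : ℤ)
    (h : (a : 𝓞 K) ∣ (b : 𝓞 K)) : a ∣ b := by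
  obtain ⟨x, hx⟩ := h
  by_cases ha : a = 0
  · subst ha
    simp only [Int.cast_zero, zero_mul] at hx
    have hbK : (b : K) = 0 := by
      have := congrArg (algebraMap (𝓞 K) K) hx
      simpa using this
    have : b = 0 := by exact_mod_cast hbK
    simp [this]
  · have haq : ((a : ℚ)) ≠ 0 := by exact_mod_cast ha
    have h2 : ((b : ℚ) : K) = ((a : ℚ) : K) * algebraMap (𝓞 K) K x := by
      have := congrArg (algebraMap (𝓞 K) K) hx
      push_cast at this ⊢
      exact this
    have hxK : algebraMap ℚ K ((b : ℚ) / (a : ℚ)) = algebraMap (𝓞 K) K x := by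
      rw [map_div₀]
      rw [div_eq_iff (by simpa using haq : (algebraMap ℚ K (a:ℚ)) ≠ 0)]
      rw [mul_comm]
      simpa using h2
    have hint : IsIntegral ℤ ((b : ℚ) / (a : ℚ)) := by
      rw [← isIntegral_algebraMap_iff (algebraMap ℚ K).injective, hxK]
      exact RingOfIntegers.isIntegral_coe x
    obtain ⟨n, hn⟩ := IsIntegrallyClosed.isIntegral_iff.mp hint
    rw [eq_intCast] at hn
    refine ⟨n, ?_⟩
    have : (b : ℚ) = (a : ℚ) * n := by
      rw [hn, mul_div_cancel₀ _ haq]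
    exact_mod_cast this

lemma aux_fixed_integral {K : Type*} [Field K] [CharZero K] [Algebra ℚ K]
    [FiniteDimensional ℚ K] [IsGalois ℚ K] (x : K)
    (hfix : ∀ σ : K ≃ₐ[ℚ] K, σ x = x) (hint : IsIntegral ℤ x) :
    ∃ n : ℤ, x = (n : K) := by
  have hmem : x ∈ IntermediateField.fixedField
      (IntermediateField.fixingSubgroup (⊥ : IntermediateField ℚ K)) := by
    intro σ
    exact hfix σ
  rw [IsGalois.fixedField_fixingSubgroup] at hmem
  rw [IntermediateField.mem_bot] at hmem
  obtain ⟨q, hq⟩ := hmem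
  have hq' : IsIntegral ℤ q := by
    rw [← isIntegral_algebraMap_iff (algebraMap ℚ K).injective, hq]
    exact hint
  obtain ⟨n, hn⟩ := IsIntegrallyClosed.isIntegral_iff.mp hq'
  refine ⟨n, ?_⟩
  rw [← hq, ← hn, eq_intCast]
  simp

lemma aux_assoc_one_sub {R : Type*} [CommRing R] [IsDomain R] {n : ℕ} [NeZero n] {η μ : R}
    (h1 : IsPrimitiveRoot η n) (h2 : IsPrimitiveRoot μ n) :
    Associated (1 - η) (1 - μ) := by
  obtain ⟨i, _, hi⟩ := h1.eq_pow_of_pow_eq_one h2.pow_eq_one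
  obtain ⟨j, _, hj⟩ := h2.eq_pow_of_pow_eq_one h1.pow_eq_one
  have key : ∀ (a b : R) (m : ℕ), a ^ m = b → 1 - a ∣ 1 - b := by
    intro a b m hab
    have h := sub_dvd_pow_sub_pow a 1 m
    rw [one_pow, hab] at h
    rw [show (1 - a) = -(a - 1) by ring, show (1 - b) = -(b - 1) by ring]
    exact (neg_dvd.mpr (dvd_neg.mpr h))
  exact associated_of_dvd_dvd (key _ _ i hi) (key _ _ j hj)

lemma aux_assoc_p {R : Type*} [CommRing R] [IsDomain R] {p : ℕ} (hp : p.Prime) {η : R}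
    (hη : IsPrimitiveRoot η p) : Associated ((p : R)) ((1 - η) ^ (p - 1)) := by
  haveI : Fact p.Prime := ⟨hp⟩
  haveI : NeZero p := ⟨hp.ne_zero⟩
  have h1 : cyclotomic p R = ∏ μ ∈ primitiveRoots p R, (X - C μ) :=
    cyclotomic_eq_prod_X_sub_primitiveRoots hη
  have h2 := congrArg (eval 1) h1
  rw [eval_one_cyclotomic_prime, eval_prod] at h2
  simp only [eval_sub, eval_X, eval_C] at h2
  have h3 : Associated (∏ μ ∈ primitiveRoots p R, (1 - μ))
      (∏ _μ ∈ primitiveRoots p R, (1 - η)) :=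
    Associated.prod _ _ _ (fun μ hμ =>
      aux_assoc_one_sub ((mem_primitiveRoots hp.pos).mp hμ) hη)
  rw [Finset.prod_const, hη.card_primitiveRoots, Nat.totient_prime hp] at h3
  exact h2 ▸ h3

lemma aux_prod_range_eq_prod_nthRoots {K : Type*} [CommRing K] [IsDomain K] {p : ℕ}
    (hp : 0 < p) [NeZero p] {ζ : K} (hζ : IsPrimitiveRoot ζ p) (g : K → K) :
    ∏ i ∈ Finset.range p, g (ζ ^ i) = ∏ μ ∈ nthRootsFinset p (1 : K), g μ := by
  refine Finset.prod_nbij (fun i => ζ ^ i) ?_ ?_ ?_ ?_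
  · intro i _
    refine (mem_nthRootsFinset hp 1).mpr ?_
    rw [← pow_mul, mul_comm, pow_mul, hζ.pow_eq_one, one_pow]
  · intro i hi j hj hij
    exact hζ.pow_inj (Finset.mem_range.mp hi) (Finset.mem_range.mp hj) hij
  · intro μ hμ
    obtain ⟨i, hlt, hieq⟩ := hζ.eq_pow_of_pow_eq_one ((mem_nthRootsFinset hp 1).mp hμ)
    exact ⟨i, Finset.mem_coe.mpr (Finset.mem_range.mpr hlt), hieq⟩
  · intro i _
    rfl

lemma aux_prod_nthRoots_map {K : Type*} [Field K] [Algebra ℚ K] {p : ℕ}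
    (hp : 0 < p) (σ : K ≃ₐ[ℚ] K) (g : K → K) :
    ∏ μ ∈ nthRootsFinset p (1 : K), g (σ μ) = ∏ μ ∈ nthRootsFinset p (1 : K), g μ := by
  refine Finset.prod_nbij' (fun μ => σ μ) (fun μ => σ.symm μ) ?_ ?_ ?_ ?_ ?_
  · intro μ hμ
    refine (mem_nthRootsFinset hp 1).mpr ?_
    rw [← map_pow, (mem_nthRootsFinset hp 1).mp hμ, map_one]
  · intro μ hμ
    refine (mem_nthRootsFinset hp 1).mpr ?_
    rw [← map_pow, (mem_nthRootsFinset hp 1).mp hμ, map_one]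
  · intro μ _; simp
  · intro μ _; simp
  · intro μ _; rfl

lemma aux_emul_add {R : Type*} [CommRing R] {π x y : R} {n : ℕ}
    (hy : emultiplicity π y = n) (hx : π ^ (n + 1) ∣ x) :
    emultiplicity π (x + y) = n := by
  rw [emultiplicity_eq_coe] at hy ⊢
  constructor
  · exact dvd_add (dvd_trans (pow_dvd_pow π (Nat.le_succ n)) hx) hy.1
  · intro hdvd
    exact hy.2 (by simpa using dvd_sub hdvd hx)

lemma aux_sum (m k : ℕ) :
    (∑ i ∈ Finset.range (m + 1), ∑ j ∈ Finset.range (m + 1),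
      (if i = 0 then (if j = 0 then m * (1 + k) else 2) else 1)) = m * (m + 4 + k) := by
  rw [Finset.sum_range_succ']
  simp only [Nat.succ_ne_zero, if_false, if_true, eq_self_iff_true, Finset.sum_const,
    Finset.card_range, smul_eq_mul]
  rw [Finset.sum_range_succ']
  simp only [Nat.succ_ne_zero, if_false, if_true, eq_self_iff_true, Finset.sum_const,
    Finset.card_range, smul_eq_mul]
  ring

/-- Let `p ≥ 5` be prime, `k ≥ 0`, and `A₁, A₂, A₃` integers not divisible by
`p`.  With `ω = e^(2πi/p)`, the integer
`N = Π_{i<p} Π_{j<p} (A₁ p^(1+k) + A₂(1-ω^i) + A₃(1-ω^j)²)`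
is exactly divisible by `p^(p+3+k)`. -/
theorem stmt16 (p : ℕ) (hp : p.Prime) (h5 : 5 ≤ p) (k : ℕ) (A₁ A₂ A₃ : ℤ)
    (h1 : ¬ (p : ℤ) ∣ A₁) (h2 : ¬ (p : ℤ) ∣ A₂) (h3 : ¬ (p : ℤ) ∣ A₃)
    (ω : ℂ) (hω : ω = Complex.exp (2 * Real.pi * Complex.I / p)) :
    ∃ N : ℤ,
      (N : ℂ) = ∏ i ∈ Finset.range p, ∏ j ∈ Finset.range p,
          ((A₁ : ℂ) * (p : ℂ) ^ (1 + k) + (A₂ : ℂ) * (1 - ω ^ i) +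
            (A₃ : ℂ) * (1 - ω ^ j) ^ 2) ∧
      (p : ℤ) ^ (p + 3 + k) ∣ N ∧ ¬ (p : ℤ) ^ (p + 4 + k) ∣ N := by
  classical
  haveI hfact : Fact p.Prime := ⟨hp⟩
  have hp0 : p ≠ 0 := hp.ne_zero
  have hppos : 0 < p := hp.pos
  haveI : NeZero p := ⟨hp0⟩
  set q : ℕ+ := ⟨p, hppos⟩ with hqdef
  have hqp : (q : ℕ) = p := rfl
  let K := CyclotomicField q ℚ
  haveI : IsCyclotomicExtension {(q : ℕ)} ℚ K := CyclotomicField.isCyclotomicExtension (n := q) ℚ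
  haveI : FiniteDimensional ℚ K := IsCyclotomicExtension.finiteDimensional {(q : ℕ)} ℚ K
  haveI : IsGalois ℚ K := IsCyclotomicExtension.isGalois {(q : ℕ)} ℚ K
  let ζ : K := IsCyclotomicExtension.zeta q ℚ K
  have hζ : IsPrimitiveRoot ζ q := IsCyclotomicExtension.zeta_spec q ℚ K
  have hζp : IsPrimitiveRoot ζ p := hζ
  set η : 𝓞 K := hζ.toInteger with hηdef
  have hηp : IsPrimitiveRoot η p := hζ.toInteger_isPrimitiveRoot
  set π : 𝓞 K := η - 1 with hπdef
  haveI : Fact (Nat.Prime (q : ℕ)) := ⟨hp⟩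
  have hπ : Prime π := hζ.zeta_sub_one_prime'
  have hηζ : algebraMap (𝓞 K) K η = ζ := rfl
  -- the product in 𝓞 K
  set F : 𝓞 K → 𝓞 K → 𝓞 K := fun a b =>
    (A₁ : 𝓞 K) * (p : 𝓞 K) ^ (1 + k) + (A₂ : 𝓞 K) * (1 - a) + (A₃ : 𝓞 K) * (1 - b) ^ 2
    with hFdef
  set P : 𝓞 K := ∏ i ∈ Finset.range p, ∏ j ∈ Finset.range p, F (η ^ i) (η ^ j) with hPdef
  -- key valuation facts
  have hassoc1η : Associated π (1 - η) := by
    have hrw : π = -(1 - η) := by rw [hπdef]; ring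
    rw [hrw]
    exact (Associated.refl _).neg_left
  have hAssocP : Associated ((p : 𝓞 K)) (π ^ (p - 1)) :=
    (aux_assoc_p hp hηp).trans (Associated.pow_pow hassoc1η.symm)
  have hnotdvd : ∀ A : ℤ, ¬ (p : ℤ) ∣ A → ¬ π ∣ (A : 𝓞 K) := by
    intro A hA hdvd
    have hd1 : π ^ (p - 1) ∣ (A : 𝓞 K) ^ (p - 1) := pow_dvd_pow_of_dvd hdvd _
    have hd2 : (((p : ℤ)) : 𝓞 K) ∣ ((A ^ (p - 1) : ℤ) : 𝓞 K) := by
      push_cast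
      exact hAssocP.dvd.trans hd1
    have hd3 : (p : ℤ) ∣ A ^ (p - 1) := aux_int_dvd_of_cast_dvd _ _ hd2
    exact hA (Int.Prime.dvd_pow' (by exact_mod_cast hp) hd3)
  have hvπ : emultiplicity π π = 1 := by
    simpa using emultiplicity_pow_self_of_prime hπ 1
  have hvlam : ∀ i : ℕ, 0 < i → i < p → emultiplicity π (1 - η ^ i) = 1 := by
    intro i hi0 hip
    have hcop : Nat.Coprime i p :=
      Nat.Coprime.symm ((Nat.Prime.coprime_iff_not_dvd hp).mpr (Nat.not_dvd_of_pos_of_lt hi0 hip))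
    have hprim : IsPrimitiveRoot (η ^ i) p := hηp.pow_of_coprime i hcop
    have h0 : Associated π (1 - η ^ i) := hassoc1η.trans (aux_assoc_one_sub hηp hprim)
    exact (emultiplicity_eq_of_associated_right h0).symm.trans hvπ
  have hvA : ∀ A : ℤ, ¬ (p : ℤ) ∣ A → emultiplicity π ((A : 𝓞 K)) = 0 := fun A hA =>
    emultiplicity_eq_zero.mpr (hnotdvd A hA)
  have hvp : emultiplicity π ((p : 𝓞 K)) = ((p - 1 : ℕ) : ℕ∞) :=
    (emultiplicity_eq_of_associated_right hAssocP).trans (emultiplicity_pow_self_of_prime hπ (p-1))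
  have hvC : emultiplicity π ((A₁ : 𝓞 K) * (p : 𝓞 K) ^ (1 + k)) = (((p-1)*(1+k) : ℕ) : ℕ∞) := by
    rw [emultiplicity_mul hπ, hvA A₁ h1, emultiplicity_pow hπ, hvp, zero_add]
    norm_cast
    ring
  have hCdvd : ∀ m : ℕ, m ≤ (p-1)*(1+k) → π ^ m ∣ (A₁ : 𝓞 K) * (p : 𝓞 K) ^ (1 + k) :=
    fun m hm => pow_dvd_of_le_emultiplicity (by rw [hvC]; exact_mod_cast hm)
  have hle4 : 4 ≤ (p-1)*(1+k) := by
    calc 4 ≤ p - 1 := by omega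
    _ ≤ (p-1)*(1+k) := Nat.le_mul_of_pos_right _ (by omega)
  have hvF : ∀ i < p, ∀ j < p, emultiplicity π (F (η ^ i) (η ^ j)) =
      ((if i = 0 then (if j = 0 then (p-1)*(1+k) else 2) else 1 : ℕ) : ℕ∞) := by
    intro i hip j hjp
    by_cases hi : i = 0
    · subst hi
      by_cases hj : j = 0
      · subst hj
        rw [if_pos rfl, if_pos rfl]
        have hF00 : F (η ^ 0) (η ^ 0) = (A₁ : 𝓞 K) * (p : 𝓞 K) ^ (1 + k) := by
          simp [hFdef]
        rw [hF00, hvC]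
      · rw [if_pos rfl, if_neg hj]
        have hy : emultiplicity π ((A₃ : 𝓞 K) * (1 - η ^ j) ^ 2) = ((2:ℕ) : ℕ∞) := by
          rw [emultiplicity_mul hπ, hvA A₃ h3, emultiplicity_pow hπ,
            hvlam j (Nat.pos_of_ne_zero hj) hjp, zero_add]
          rfl
        refine aux_emul_add hy ?_
        have h00 : (1 : 𝓞 K) - η ^ 0 = 0 := by simp
        rw [h00, mul_zero, add_zero]
        exact hCdvd 3 (by omega)
    · rw [if_neg hi]
      have hy : emultiplicity π ((A₂ : 𝓞 K) * (1 - η ^ i)) = ((1:ℕ) : ℕ∞) := by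
        rw [emultiplicity_mul hπ, hvA A₂ h2, hvlam i (Nat.pos_of_ne_zero hi) hip, zero_add]
        rfl
      have hre : F (η ^ i) (η ^ j) =
          ((A₁ : 𝓞 K) * (p : 𝓞 K) ^ (1 + k) + (A₃ : 𝓞 K) * (1 - η ^ j) ^ 2) +
            (A₂ : 𝓞 K) * (1 - η ^ i) := by
        rw [hFdef]; ring
      rw [hre]
      refine aux_emul_add hy (dvd_add (hCdvd 2 (by omega)) ?_)
      by_cases hj : j = 0
      · subst hj
        simp
      · refine Dvd.dvd.mul_left ?_ _
        have hdvd1 : π ∣ (1 - η ^ j) :=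
          dvd_of_emultiplicity_pos (by rw [hvlam j (Nat.pos_of_ne_zero hj) hjp]; norm_num)
        calc π ^ 2 ∣ (1 - η ^ j) ^ 2 := pow_dvd_pow_of_dvd hdvd1 2
        _ = (1 - η ^ j) ^ 2 := rfl
  have hvP : emultiplicity π P = (((p-1)*(p+3+k) : ℕ) : ℕ∞) := by
    obtain ⟨m, hm⟩ : ∃ m, p = m + 1 := ⟨p - 1, (Nat.succ_pred_eq_of_pos hppos).symm⟩
    rw [hPdef, Finset.emultiplicity_prod hπ]
    have hinner : ∀ i ∈ Finset.range p,
        emultiplicity π (∏ j ∈ Finset.range p, F (η ^ i) (η ^ j)) =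
        ((∑ j ∈ Finset.range p,
          (if i = 0 then (if j = 0 then (p-1)*(1+k) else 2) else 1) : ℕ) : ℕ∞) := by
      intro i hi
      rw [Finset.emultiplicity_prod hπ, Nat.cast_sum]
      exact Finset.sum_congr rfl fun j hj =>
        hvF i (Finset.mem_range.mp hi) j (Finset.mem_range.mp hj)
    rw [Finset.sum_congr rfl hinner, ← Nat.cast_sum]
    norm_cast
    have := aux_sum m k
    rw [hm]
    simpa using this
  -- integrality and conclusion
  set GK : K → K → K := fun a b =>
    (A₁ : K) * (p : K) ^ (1 + k) + (A₂ : K) * (1 - a) + (A₃ : K) * (1 - b) ^ 2 with hGdef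
  have hPK : algebraMap (𝓞 K) K P =
      ∏ i ∈ Finset.range p, ∏ j ∈ Finset.range p, GK (ζ ^ i) (ζ ^ j) := by
    rw [hPdef, map_prod]
    refine Finset.prod_congr rfl fun i _ => ?_
    rw [map_prod]
    refine Finset.prod_congr rfl fun j _ => ?_
    simp only [hFdef, hGdef, map_add, map_mul, map_pow, map_sub, map_one, map_intCast,
      map_natCast, hηζ]
  have hPK2 : algebraMap (𝓞 K) K P =
      ∏ μ ∈ nthRootsFinset p (1 : K), ∏ ν ∈ nthRootsFinset p (1 : K), GK μ ν := by
    rw [hPK, aux_prod_range_eq_prod_nthRoots hppos hζp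
      (fun μ => ∏ j ∈ Finset.range p, GK μ (ζ ^ j))]
    exact Finset.prod_congr rfl fun μ _ => aux_prod_range_eq_prod_nthRoots hppos hζp (GK μ)
  have hfix : ∀ σ : K ≃ₐ[ℚ] K, σ (algebraMap (𝓞 K) K P) = algebraMap (𝓞 K) K P := by
    intro σ
    rw [hPK2, map_prod]
    have hσG : ∀ μ ν : K, σ (GK μ ν) = GK (σ μ) (σ ν) := by
      intro μ ν
      simp only [hGdef, map_add, map_mul, map_pow, map_sub, map_one, map_intCast σ, map_natCast σ]
    have hstep : ∀ μ : K, σ (∏ ν ∈ nthRootsFinset p (1 : K), GK μ ν) =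
        ∏ ν ∈ nthRootsFinset p (1 : K), GK (σ μ) ν := by
      intro μ
      rw [map_prod, Finset.prod_congr rfl (fun ν _ => hσG μ ν)]
      exact aux_prod_nthRoots_map hppos σ (GK (σ μ))
    rw [Finset.prod_congr rfl (fun μ _ => hstep μ)]
    exact aux_prod_nthRoots_map hppos σ (fun μ => ∏ ν ∈ nthRootsFinset p (1 : K), GK μ ν)
  obtain ⟨N, hN⟩ := aux_fixed_integral _ hfix (RingOfIntegers.isIntegral_coe P)
  have hNP : P = (N : 𝓞 K) := by
    apply NumberField.RingOfIntegers.coe_injective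
    rw [hN, map_intCast]
  -- the embedding into ℂ
  have hωprim : IsPrimitiveRoot ω p := by rw [hω]; exact Complex.isPrimitiveRoot_exp p hp0
  haveI : NeZero ((p : ℕ) : ℚ) := ⟨by exact_mod_cast hp0⟩
  have hirr : Irreducible (cyclotomic p ℚ) := cyclotomic.irreducible_rat hppos
  have hmin : minpoly ℚ ζ = cyclotomic p ℚ :=
    (hζp.minpoly_eq_cyclotomic_of_irreducible hirr).symm
  set pb := hζ.powerBasis ℚ with hpbdef
  have hgen : pb.gen = ζ := hζ.powerBasis_gen ℚ
  have hroot : (Polynomial.aeval ω) (minpoly ℚ pb.gen) = 0 := by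
    rw [hgen, hmin, aeval_def, ← eval_map, map_cyclotomic]
    exact hωprim.isRoot_cyclotomic hppos
  set φ : K →ₐ[ℚ] ℂ := pb.lift ω hroot with hφdef
  have hφζ : φ ζ = ω := by
    have := pb.lift_gen ω hroot
    rwa [hgen] at this
  refine ⟨N, ?_, ?_, ?_⟩
  · have hφP : φ (algebraMap (𝓞 K) K P) = ∏ i ∈ Finset.range p, ∏ j ∈ Finset.range p,
        ((A₁ : ℂ) * (p : ℂ) ^ (1 + k) + (A₂ : ℂ) * (1 - ω ^ i) +
          (A₃ : ℂ) * (1 - ω ^ j) ^ 2) := by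
      rw [hPK, map_prod]
      refine Finset.prod_congr rfl fun i _ => ?_
      rw [map_prod]
      refine Finset.prod_congr rfl fun j _ => ?_
      simp only [hGdef, map_add, map_mul, map_pow, map_sub, map_one, map_intCast φ,
        map_natCast φ, hφζ]
    rw [← hφP, hNP, map_intCast, map_intCast]
  · apply aux_int_dvd_of_cast_dvd (K := K)
    have hassocpow : Associated ((p : 𝓞 K) ^ (p+3+k)) (π ^ ((p-1)*(p+3+k))) := by
      have := hAssocP.pow_pow (n := p+3+k)
      rwa [← pow_mul] at this
    have hdvd : π ^ ((p-1)*(p+3+k)) ∣ P := pow_dvd_of_le_emultiplicity (le_of_eq hvP.symm)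
    have hfin : ((p : 𝓞 K)) ^ (p+3+k) ∣ (N : 𝓞 K) := hNP ▸ hassocpow.dvd.trans hdvd
    push_cast
    exact hfin
  · intro hcon
    have h1' : (((p:ℤ) ^ (p+4+k) : ℤ) : 𝓞 K) ∣ ((N : ℤ) : 𝓞 K) :=
      map_dvd (Int.castRingHom (𝓞 K)) hcon
    push_cast at h1'
    rw [← hNP] at h1'
    have hassocpow : Associated ((p : 𝓞 K) ^ (p+4+k)) (π ^ ((p-1)*(p+4+k))) := by
      have := hAssocP.pow_pow (n := p+4+k)
      rwa [← pow_mul] at this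
    have h2' : π ^ ((p-1)*(p+4+k)) ∣ P := hassocpow.symm.dvd.trans h1'
    have hlt : emultiplicity π P < (((p-1)*(p+4+k) : ℕ) : ℕ∞) := by
      rw [hvP]
      exact_mod_cast mul_lt_mul_of_pos_left (by omega : p+3+k < p+4+k) (by omega : 0 < p - 1)
    exact not_pow_dvd_of_emultiplicity_lt hlt h2'
end
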